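/- arXiv:1708.01854 — 6 statements merged into one kernel-verified Lean document; each statement's English description precedes it below -/
import Mathlib

section
/- Let R be a nontrivial commutative ring and n a positive integer, and equip the free module R^n with the Hamming weight with respect to the standard basis e_1, …, e_n. An R-linear automorphism ρ of R^n preserves the Hamming weight (w(ρ(x)) = w(x) for all x ∈ R^n) if and only if there exist a permutation π of {1,…,n} and units r_1, …, r_n ∈ R^* such that ρ(e_i) = r_i · e_{π(i)} for all i. Consequently, the group of Hamming-weight-preserving R-linear automorphisms of R^n is isomorphic to the wreath product (R^*)^n ⋊ Σ_n, where the symmetric group Σ_n acts on (R^*)^n by permuting coordinates. -/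
/-- The group of `R`-linear automorphisms of `R^n` preserving the Hamming weight. -/
def hammingIsometryGroup (n : ℕ) (R : Type*) [CommRing R] [DecidableEq R] :
    Subgroup ((Fin n → R) ≃ₗ[R] (Fin n → R)) where
  carrier := {ρ | ∀ x : Fin n → R, hammingNorm (ρ x) = hammingNorm x}
  one_mem' := fun _ => rfl
  mul_mem' := by
    intro a b ha hb x
    exact (ha (b x)).trans (hb x)
  inv_mem' := by
    intro a ha x
    have h := ha (a.symm x)
    rw [a.apply_symm_apply] at h
    exact h.symm

/-- The symmetric group `Σ_n` acting on `(Rˣ)^n` by permuting coordinates. -/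
def permOnUnits (n : ℕ) (R : Type*) [CommRing R] :
    Equiv.Perm (Fin n) →* MulAut (Fin n → Rˣ) where
  toFun π :=
    { toFun := fun v => v ∘ π.symm
      invFun := fun v => v ∘ π
      left_inv := fun v => by ext i; simp
      right_inv := fun v => by ext i; simp
      map_mul' := fun v w => rfl }
  map_one' := by ext v i; rfl
  map_mul' := fun π τ => rfl


section
set_option linter.unusedSectionVars false
variable {n : ℕ} {R : Type*} [CommRing R] [DecidableEq R]

def monEquiv (v : Fin n → Rˣ) (π : Equiv.Perm (Fin n)) :
    (Fin n → R) ≃ₗ[R] (Fin n → R) where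
  toFun x := fun j => (v j : R) * x (π.symm j)
  map_add' x y := by ext j; simp [mul_add]
  map_smul' c x := by ext j; simp; ring
  invFun y := fun i => ((v (π i))⁻¹ : Rˣ) * y (π i)
  left_inv x := by ext i; simp
  right_inv y := by ext j; simp

lemma monEquiv_apply (v : Fin n → Rˣ) (π : Equiv.Perm (Fin n)) (x : Fin n → R) (j : Fin n) :
    monEquiv v π x j = (v j : R) * x (π.symm j) := rfl

lemma monEquiv_norm (v : Fin n → Rˣ) (π : Equiv.Perm (Fin n)) (x : Fin n → R) :
    hammingNorm (monEquiv v π x) = hammingNorm x := by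
  unfold hammingNorm
  refine Finset.card_equiv π.symm fun j => ?_
  simp [monEquiv_apply, Units.mul_right_eq_zero]

lemma monEquiv_single (v : Fin n → Rˣ) (π : Equiv.Perm (Fin n)) (i : Fin n) :
    monEquiv v π (Pi.single i (1:R)) = (v (π i) : R) • (Pi.single (π i) 1 : Fin n → R) := by
  ext j
  simp only [monEquiv_apply, Pi.smul_apply, Pi.single_apply, smul_eq_mul,
    Equiv.symm_apply_eq]
  by_cases h : j = π i <;> simp [h]

def monHom : (Fin n → Rˣ) ⋊[permOnUnits n R] Equiv.Perm (Fin n) →*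
    ((Fin n → R) ≃ₗ[R] (Fin n → R)) where
  toFun p := monEquiv p.left p.right
  map_one' := by
    refine LinearEquiv.ext fun x => funext fun j => ?_
    simp [monEquiv_apply]
    rfl
  map_mul' a b := by
    refine LinearEquiv.ext fun x => funext fun j => ?_
    show monEquiv (a * b).left (a * b).right x j
      = monEquiv a.left a.right (monEquiv b.left b.right x) j
    simp only [monEquiv_apply, SemidirectProduct.mul_left, SemidirectProduct.mul_right,
      Pi.mul_apply, Units.val_mul]
    have h1 : ((permOnUnits n R a.right) b.left) j = b.left (a.right.symm j) := rfl
    have h2 : (a.right * b.right).symm j = b.right.symm (a.right.symm j) := rfl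
    rw [h1, h2, mul_assoc]

end

section
set_option linter.unusedSectionVars false
variable {n : ℕ} {R : Type*} [CommRing R] [DecidableEq R]

lemma linearEquiv_ext_single {ρ σ : (Fin n → R) ≃ₗ[R] (Fin n → R)}
    (h : ∀ i, ρ (Pi.single i 1) = σ (Pi.single i 1)) : ρ = σ := by
  apply LinearEquiv.toLinearMap_injective
  apply LinearMap.pi_ext
  intro i x
  have hx : (Pi.single i x : Fin n → R) = x • (Pi.single i 1 : Fin n → R) := by
    ext l; simp [Pi.single_apply, mul_comm]
  rw [hx]
  simp only [map_smul]
  simp [h i]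

lemma hammingNorm_single_one [Nontrivial R] (i : Fin n) :
    hammingNorm (Pi.single i 1 : Fin n → R) = 1 := by
  unfold hammingNorm
  rw [show (Finset.filter (fun j => (Pi.single i 1 : Fin n → R) j ≠ 0) Finset.univ) = {i}
    from ?_, Finset.card_singleton]
  ext j
  by_cases hj : j = i <;> simp [Pi.single_apply, hj]

lemma key [Nontrivial R] (ρ : (Fin n → R) ≃ₗ[R] (Fin n → R))
    (h : ∀ x : Fin n → R, hammingNorm (ρ x) = hammingNorm x) :
    ∃ (π : Equiv.Perm (Fin n)) (r : Fin n → Rˣ), ∀ i : Fin n,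
      ρ (Pi.single i 1) = (r i : R) • (Pi.single (π i) 1 : Fin n → R) := by
  have hsingle : ∀ i : Fin n, ∃ (j : Fin n) (c : R), c ≠ 0 ∧
      ρ (Pi.single i 1) = Pi.single j c := by
    intro i
    have h1 : hammingNorm (ρ (Pi.single i 1)) = 1 := by
      rw [h, hammingNorm_single_one]
    unfold hammingNorm at h1
    obtain ⟨j, hj⟩ := Finset.card_eq_one.mp h1
    have hmem : ∀ k : Fin n, ρ (Pi.single i 1) k ≠ 0 ↔ k = j := by
      intro k
      constructor
      · intro hk
        have : k ∈ Finset.filter (fun l => ρ (Pi.single i 1) l ≠ 0) Finset.univ := by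
          simpa using hk
        rw [hj] at this; simpa using this
      · rintro rfl
        have : k ∈ Finset.filter (fun l => ρ (Pi.single i 1) l ≠ 0) Finset.univ := by
          rw [hj]; simp
        simpa using this
    refine ⟨j, ρ (Pi.single i 1) j, (hmem j).mpr rfl, ?_⟩
    ext k
    rcases eq_or_ne k j with rfl | hk
    · simp
    · rw [Pi.single_apply, if_neg hk]
      by_contra hc
      exact hk ((hmem k).mp hc)
  choose p c hc0 hpc using hsingle
  have hinj : Function.Injective p := by
    intro i j hij
    by_contra hne
    have hx : ρ ((c j) • (Pi.single i 1 : Fin n → R) - (c i) • (Pi.single j 1 : Fin n → R)) = 0 := by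
      rw [map_sub, map_smul, map_smul, hpc i, hpc j, hij]
      rw [← Pi.single_smul, ← Pi.single_smul, smul_eq_mul, smul_eq_mul, mul_comm, sub_self]
    have hx0 : ((c j) • (Pi.single i 1 : Fin n → R) - (c i) • (Pi.single j 1 : Fin n → R)) = 0 := by
      have h0 : ρ ((c j) • (Pi.single i 1 : Fin n → R) - (c i) • (Pi.single j 1 : Fin n → R))
          = ρ 0 := by rw [hx, map_zero]
      exact ρ.injective h0
    have := congrFun hx0 i
    simp [Pi.single_apply, hne, Ne.symm hne] at this
    exact hc0 j this
  have hbij : Function.Bijective p := Finite.injective_iff_bijective.mp hinj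
  set π : Equiv.Perm (Fin n) := Equiv.ofBijective p hbij with hπ
  have hπa : ∀ i, π i = p i := fun i => rfl
  have hunit : ∀ i : Fin n, IsUnit (c i) := by
    intro i
    set y := ρ.symm (Pi.single (p i) 1) with hy
    have h1 : ρ y = Pi.single (p i) 1 := ρ.apply_symm_apply _
    have h2 : ρ y = ∑ j : Fin n, y j • (Pi.single (p j) (c j) : Fin n → R) := by
      conv_lhs => rw [← Finset.univ_sum_single y]
      rw [map_sum]
      congr 1
      ext j k
      rw [show (Pi.single j (y j) : Fin n → R) = y j • (Pi.single j 1 : Fin n → R) by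
        ext l; simp [Pi.single_apply, mul_comm]]
      rw [map_smul, hpc j]
    have h3 : (1 : R) = y i * c i := by
      have := congrFun (h1.symm.trans h2) (p i)
      rw [Pi.single_eq_same, Finset.sum_apply] at this
      rw [this, Finset.sum_eq_single i]
      · simp
      · intro b _ hb
        have : p i ≠ p b := fun hh => hb (hinj hh.symm)
        simp [Pi.single_apply, this.symm]
      · simp
    exact IsUnit.of_mul_eq_one (b := y i) (by rw [mul_comm, ← h3])
  choose r hr using hunit
  refine ⟨π, r, fun i => ?_⟩
  rw [hpc i, hr i]
  ext k
  simp [Pi.single_apply, hπa, mul_comm]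

end


/-- over a nontrivial commutative ring `R`, an `R`-linear automorphism of
`R^n` preserves the Hamming weight iff it is monomial, i.e. sends each standard basis
vector `e_i` to `r_i • e_{π i}` for a permutation `π` and units `r_i`; consequently the
group of Hamming-weight preserving `R`-linear automorphisms of `R^n` is isomorphic to
the wreath product `(Rˣ)^n ⋊ Σ_n`. -/
theorem hamming_isometry_iff_monomial (n : ℕ) (R : Type*) [CommRing R] [Nontrivial R]
    [DecidableEq R] :
    (∀ ρ : (Fin n → R) ≃ₗ[R] (Fin n → R),
      (∀ x : Fin n → R, hammingNorm (ρ x) = hammingNorm x) ↔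
        ∃ (π : Equiv.Perm (Fin n)) (r : Fin n → Rˣ), ∀ i : Fin n,
          ρ (Pi.single i 1) = (r i : R) • (Pi.single (π i) 1 : Fin n → R)) ∧
    Nonempty (hammingIsometryGroup n R ≃*
      (Fin n → Rˣ) ⋊[permOnUnits n R] Equiv.Perm (Fin n)) := by
  have hmono : ∀ (ρ : (Fin n → R) ≃ₗ[R] (Fin n → R)) (π : Equiv.Perm (Fin n))
      (r : Fin n → Rˣ), (∀ i : Fin n,
        ρ (Pi.single i 1) = (r i : R) • (Pi.single (π i) 1 : Fin n → R)) →
      ρ = monEquiv (fun j => r (π.symm j)) π := by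
    intro ρ π r hr
    apply linearEquiv_ext_single
    intro i
    rw [hr i, monEquiv_single]
    simp
  constructor
  · intro ρ
    constructor
    · exact key ρ
    · rintro ⟨π, r, hr⟩ x
      rw [hmono ρ π r hr]
      exact monEquiv_norm _ _ _
  · have hmem : ∀ p : (Fin n → Rˣ) ⋊[permOnUnits n R] Equiv.Perm (Fin n),
        monHom p ∈ hammingIsometryGroup n R := fun p x => monEquiv_norm _ _ _
    let Φ := (monHom (n := n) (R := R)).codRestrict (hammingIsometryGroup n R) hmem
    have hbij : Function.Bijective Φ := by
      constructor
      · rw [injective_iff_map_eq_one]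
        intro p hp
        have h1 : monEquiv p.left p.right = (1 : (Fin n → R) ≃ₗ[R] (Fin n → R)) :=
          congrArg Subtype.val hp
        have h2 : ∀ i : Fin n, ((p.left (p.right i) : R) •
            (Pi.single (p.right i) 1 : Fin n → R)) = Pi.single i 1 := by
          intro i
          rw [← monEquiv_single p.left p.right i, h1]
          rfl
        have hfix : ∀ i : Fin n, p.right i = i := by
          intro i
          by_contra hne
          have := congrFun (h2 i) (p.right i)
          simp [Pi.single_apply, hne] at this
        have hone : ∀ i : Fin n, p.left i = 1 := by
          intro i
          have := congrFun (h2 i) i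
          rw [hfix i] at this
          simp at this
          exact Units.ext (by simpa using this)
        have hl : p.left = 1 := funext hone
        have hrr : p.right = 1 := Equiv.ext hfix
        cases p
        simp_all
      · rintro ⟨ρ, hρ⟩
        obtain ⟨π, r, hr⟩ := key ρ hρ
        refine ⟨⟨fun j => r (π.symm j), π⟩, ?_⟩
        apply Subtype.ext
        exact (hmono ρ π r hr).symm
    exact ⟨(MulEquiv.ofBijective Φ hbij).symm⟩
end

section
/- Let C_n = ⟨σ⟩ be a cyclic group of order n acting on a field F by field automorphisms, and let N : F^* → F^*, N(x) = ∏_{i=0}^{n-1} σ^i(x), be the norm map. Then two 2-cocycles f_1, f_2 : C_n × C_n → F^* (for this action) are cohomologous if and only if β_{f_1}^{-1} · β_{f_2} lies in the image N(F^*), where β_f := ∏_{i=0}^{n-1} f(σ^i, σ). Consequently, the map f ↦ β_f induces a group isomorphism between the group of 2-cocycles modulo 2-coboundaries H²_η(C_n, F^*) and the quotient group (F^*)^{C_n} / N(F^*). -/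
def IsTwoCocycle {G F : Type*} [Group G] [Field F] (η : G →* RingAut F)
    (f : G → G → Fˣ) : Prop :=
  ∀ g h k : G, η g (f h k : F) * ((f g (h * k) : Fˣ) : F) =
    ((f g h : Fˣ) : F) * ((f (g * h) k : Fˣ) : F)

def IsTwoCoboundary {G F : Type*} [Group G] [Field F] (η : G →* RingAut F)
    (f : G → G → Fˣ) : Prop :=
  ∃ r : G → Fˣ, ∀ g h : G,
    (f g h : F) = (r g : F) * η g (r h : F) * (((r (g * h))⁻¹ : Fˣ) : F)

def Cohomologous {G F : Type*} [Group G] [Field F] (η : G →* RingAut F)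
    (f₁ f₂ : G → G → Fˣ) : Prop :=
  IsTwoCoboundary η fun g h => f₁ g h * (f₂ g h)⁻¹

/-- The group of 2-cocycles, as a subgroup of all functions `G → G → Fˣ`. -/
def twoCocycles {G F : Type*} [Group G] [Field F] (η : G →* RingAut F) :
    Subgroup (G → G → Fˣ) where
  carrier := {f | IsTwoCocycle η f}
  one_mem' := by intro g h k; simp
  mul_mem' := by
    intro a b ha hb g h k
    simp only [Pi.mul_apply, Units.val_mul, map_mul]
    rw [mul_mul_mul_comm, ha g h k, hb g h k, mul_mul_mul_comm]
  inv_mem' := by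
    intro a ha g h k
    simp only [Pi.inv_apply, Units.val_inv_eq_inv_val, map_inv₀]
    rw [← mul_inv, ← mul_inv, ha g h k]

/-- The group of 2-coboundaries, as a subgroup of all functions `G → G → Fˣ`. -/
def twoCoboundaries {G F : Type*} [Group G] [Field F] (η : G →* RingAut F) :
    Subgroup (G → G → Fˣ) where
  carrier := {f | IsTwoCoboundary η f}
  one_mem' := ⟨1, by intro g h; simp⟩
  mul_mem' := by
    rintro a b ⟨r, hr⟩ ⟨t, ht⟩
    refine ⟨r * t, fun g h => ?_⟩
    simp only [Pi.mul_apply, Units.val_mul, map_mul, mul_inv, hr g h, ht g h,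
      Units.val_inv_eq_inv_val]
    ring
  inv_mem' := by
    rintro a ⟨r, hr⟩
    refine ⟨r⁻¹, fun g h => ?_⟩
    simp only [Pi.inv_apply, Units.val_inv_eq_inv_val, map_inv₀, hr g h, inv_inv, mul_inv]

/-- The second cohomology group `H²_η(G, F^*)`: 2-cocycles modulo 2-coboundaries. -/
abbrev H2 {G F : Type*} [Group G] [Field F] (η : G →* RingAut F) :=
  twoCocycles η ⧸ ((twoCoboundaries η).subgroupOf (twoCocycles η))

/-- The norm map `x ↦ ∏_{i=0}^{n-1} σ^i(x)` on `F^*`. -/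
def cyclicNormHom {G F : Type*} [Group G] [Field F] (η : G →* RingAut F) (σ : G) (n : ℕ) :
    Fˣ →* Fˣ where
  toFun x := ∏ i ∈ Finset.range n, Units.map (η (σ ^ i)).toMonoidHom x
  map_one' := by simp
  map_mul' x y := by simp [Finset.prod_mul_distrib]

/-- The subgroup `(F^*)^{C_n}` of elements of `F^*` fixed by the action. -/
def fixedUnits {G F : Type*} [Group G] [Field F] (η : G →* RingAut F) :
    Subgroup Fˣ where
  carrier := {x | ∀ g : G, η g (x : F) = (x : F)}
  one_mem' := by intro g; simp
  mul_mem' := by intro a b ha hb g; simp [ha g, hb g]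
  inv_mem' := by intro a ha g; simp [ha g]

namespace CycAux

variable {G F : Type*} [Group G] [Field F]

/-- the action on units -/
abbrev uact (η : G →* RingAut F) (g : G) : Fˣ →* Fˣ := Units.map (η g).toMonoidHom

lemma uact_coe (η : G →* RingAut F) (g : G) (u : Fˣ) :
    ((uact η g u : Fˣ) : F) = η g (u : F) := rfl

lemma uact_one (η : G →* RingAut F) (u : Fˣ) : uact η 1 u = u := by
  ext
  simp only [uact_coe, map_one]
  rfl

lemma uact_mul (η : G →* RingAut F) (g h : G) (u : Fˣ) :
    uact η (g * h) u = uact η g (uact η h u) := by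
  ext
  simp only [uact_coe, map_mul]
  rfl

lemma cocycle_units {η : G →* RingAut F} {f : G → G → Fˣ} (hf : IsTwoCocycle η f)
    (g h k : G) : uact η g (f h k) * f g (h * k) = f g h * f (g * h) k := by
  ext
  simpa [uact_coe] using hf g h k

lemma isTwoCoboundary_iff_units {η : G →* RingAut F} {f : G → G → Fˣ} :
    IsTwoCoboundary η f ↔
      ∃ r : G → Fˣ, ∀ g h, f g h = r g * uact η g (r h) * (r (g * h))⁻¹ := by
  constructor
  · rintro ⟨r, hr⟩
    exact ⟨r, fun g h => by ext; simpa [uact_coe] using hr g h⟩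
  · rintro ⟨r, hr⟩
    refine ⟨r, fun g h => ?_⟩
    rw [hr g h]
    simp [uact_coe]

lemma prod_shift_one {M : Type*} [CommGroup M] {σ : G} {n : ℕ} (hσ : σ ^ n = 1)
    (p : G → M) :
    ∏ j ∈ Finset.range n, p (σ ^ (j + 1)) = ∏ j ∈ Finset.range n, p (σ ^ j) := by
  have h1 : (∏ j ∈ Finset.range n, p (σ ^ (j + 1))) * p (σ ^ 0) =
      (∏ j ∈ Finset.range n, p (σ ^ j)) * p (σ ^ n) :=
    (Finset.prod_range_succ' (fun j => p (σ ^ j)) n).symm.trans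
      (Finset.prod_range_succ (fun j => p (σ ^ j)) n)
  rw [hσ, pow_zero] at h1
  exact mul_right_cancel h1

lemma prod_shift {M : Type*} [CommGroup M] {σ : G} {n : ℕ} (hσ : σ ^ n = 1)
    (p : G → M) (m : ℕ) :
    ∏ j ∈ Finset.range n, p (σ ^ m * σ ^ j) = ∏ j ∈ Finset.range n, p (σ ^ j) := by
  induction m with
  | zero => simp
  | succ m ih =>
    have h2 : ∀ j : ℕ, σ ^ (m + 1) * σ ^ j = σ ^ m * σ ^ (j + 1) := by
      intro j
      rw [pow_succ, pow_succ]
      group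
    calc ∏ j ∈ Finset.range n, p (σ ^ (m + 1) * σ ^ j)
        = ∏ j ∈ Finset.range n, (fun g => p (σ ^ m * g)) (σ ^ (j + 1)) := by
          refine Finset.prod_congr rfl fun j _ => ?_
          simp only [h2 j]
      _ = ∏ j ∈ Finset.range n, (fun g => p (σ ^ m * g)) (σ ^ j) := prod_shift_one hσ (fun g => p (σ ^ m * g))
      _ = ∏ j ∈ Finset.range n, p (σ ^ j) := ih


variable (η : G →* RingAut F) (σ : G) (f : G → G → Fˣ)

/-- partial products of `f(σ^j, σ)` -/
def Uf (m : ℕ) : Fˣ := ∏ j ∈ Finset.range m, f (σ ^ j) σ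

/-- partial "norms" of `x` -/
def Xf (x : Fˣ) (m : ℕ) : Fˣ := ∏ j ∈ Finset.range m, uact η (σ ^ j) x

lemma Uf_succ (m : ℕ) : Uf σ f (m + 1) = Uf σ f m * f (σ ^ m) σ :=
  Finset.prod_range_succ _ m

lemma Xf_add (x : Fˣ) (i k : ℕ) :
    Xf η σ x (i + k) = Xf η σ x i * uact η (σ ^ i) (Xf η σ x k) := by
  rw [Xf, Xf, Xf, Finset.prod_range_add, map_prod]
  congr 1
  refine Finset.prod_congr rfl fun j _ => ?_
  rw [← uact_mul, ← pow_add]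

lemma Xf_norm (n : ℕ) (x : Fˣ) : cyclicNormHom η σ n x = Xf η σ x n := rfl

variable {n : ℕ}

lemma Uf_add (hσn : σ ^ n = 1) (m : ℕ) :
    Uf σ f (m + n) = Uf σ f m * Uf σ f n := by
  rw [Uf, Uf, Uf, Finset.prod_range_add]
  congr 1
  calc ∏ j ∈ Finset.range n, f (σ ^ (m + j)) σ
      = ∏ j ∈ Finset.range n, (fun g => f g σ) (σ ^ m * σ ^ j) := by
        refine Finset.prod_congr rfl fun j _ => ?_
        rw [pow_add]
    _ = ∏ j ∈ Finset.range n, f (σ ^ j) σ := prod_shift hσn (fun g => f g σ) m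

lemma Xf_pd (hσn : σ ^ n = 1) (x : Fˣ) (m : ℕ) :
    Xf η σ x (m + n) = Xf η σ x m * Xf η σ x n := by
  rw [Xf, Xf, Xf, Finset.prod_range_add]
  congr 1
  calc ∏ j ∈ Finset.range n, uact η (σ ^ (m + j)) x
      = ∏ j ∈ Finset.range n, (fun g => uact η g x) (σ ^ m * σ ^ j) := by
        refine Finset.prod_congr rfl fun j _ => ?_
        rw [pow_add]
    _ = ∏ j ∈ Finset.range n, uact η (σ ^ j) x := prod_shift hσn (fun g => uact η g x) m

lemma f_pow {η : G →* RingAut F} {f : G → G → Fˣ} (hf : IsTwoCocycle η f) (i k : ℕ) :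
    f (σ ^ i) (σ ^ k) * Uf σ f i * uact η (σ ^ i) (Uf σ f k) =
      uact η (σ ^ i) (f 1 1) * Uf σ f (i + k) := by
  induction k with
  | zero =>
    have h := cocycle_units hf (σ ^ i) 1 1
    rw [mul_one, mul_one] at h
    have h2 : f (σ ^ i) 1 = uact η (σ ^ i) (f 1 1) := (mul_right_cancel h).symm
    simp [Uf, h2]
  | succ k ih =>
    have h := cocycle_units hf (σ ^ i) (σ ^ k) σ
    rw [← pow_succ, ← pow_add] at h
    rw [Uf_succ, ← add_assoc, Uf_succ, map_mul]
    rw [Units.ext_iff] at h ih ⊢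
    simp only [Units.val_mul] at h ih ⊢
    linear_combination (Uf σ f i : F) * (uact η (σ ^ i) (Uf σ f k) : F) * h +
      (f (σ ^ (i + k)) σ : F) * ih

lemma beta_fixed {η : G →* RingAut F} {f : G → G → Fˣ} {n : ℕ} (hσn : σ ^ n = 1)
    (hgen : ∀ g : G, g ∈ Subgroup.zpowers σ) (hf : IsTwoCocycle η f) (g : G) :
    uact η g (Uf σ f n) = Uf σ f n := by
  set β := Uf σ f n with hβ
  have hσβ : uact η σ β = β := by
    have h2 : uact η σ β * ∏ i ∈ Finset.range n, f σ (σ ^ (i + 1)) =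
        (∏ i ∈ Finset.range n, f σ (σ ^ i)) * ∏ i ∈ Finset.range n, f (σ ^ (i + 1)) σ := by
      rw [hβ, Uf, map_prod, ← Finset.prod_mul_distrib, ← Finset.prod_mul_distrib]
      refine Finset.prod_congr rfl fun i _ => ?_
      have := cocycle_units hf σ (σ ^ i) σ
      rw [← pow_succ, ← pow_succ'] at this
      exact this
    rw [prod_shift_one hσn (fun g => f σ g), prod_shift_one hσn (fun g => f g σ)] at h2
    rw [mul_comm (∏ i ∈ Finset.range n, f σ (σ ^ i)) _] at h2
    have : (∏ j ∈ Finset.range n, f (σ ^ j) σ) = β := rfl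
    rw [this] at h2
    exact mul_right_cancel h2
  have hinv : uact η σ⁻¹ β = β := by
    conv_lhs => rw [← hσβ, ← uact_mul, inv_mul_cancel, uact_one]
  obtain ⟨m, rfl⟩ := Subgroup.mem_zpowers_iff.mp (hgen g)
  induction m using Int.induction_on with
  | zero => rw [zpow_zero, uact_one]
  | succ k ih => rw [zpow_add_one, uact_mul, hσβ, ih]
  | pred k ih => rw [zpow_sub_one, uact_mul, hinv, ih]

lemma beta_of_coboundary {η : G →* RingAut F} {f : G → G → Fˣ} {n : ℕ} (hσn : σ ^ n = 1)
    (hfb : IsTwoCoboundary η f) :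
    ∃ x, Uf σ f n = cyclicNormHom η σ n x := by
  obtain ⟨r, hr⟩ := isTwoCoboundary_iff_units.mp hfb
  refine ⟨r σ, ?_⟩
  have h1 : Uf σ f n = (∏ i ∈ Finset.range n, r (σ ^ i)) *
      (∏ i ∈ Finset.range n, uact η (σ ^ i) (r σ)) *
      (∏ i ∈ Finset.range n, r (σ ^ i * σ))⁻¹ := by
    rw [Uf, ← Finset.prod_inv_distrib, ← Finset.prod_mul_distrib, ← Finset.prod_mul_distrib]
    exact Finset.prod_congr rfl fun i _ => hr _ _
  have h2 : (∏ i ∈ Finset.range n, r (σ ^ i * σ)) = ∏ i ∈ Finset.range n, r (σ ^ i) := by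
    calc (∏ i ∈ Finset.range n, r (σ ^ i * σ)) = ∏ i ∈ Finset.range n, r (σ ^ (i + 1)) := by
          refine Finset.prod_congr rfl fun i _ => ?_
          rw [pow_succ]
      _ = _ := prod_shift_one hσn r
  rw [h1, h2, Xf_norm]
  have : (∏ i ∈ Finset.range n, uact η (σ ^ i) (r σ)) = Xf η σ (r σ) n := rfl
  rw [this, mul_right_comm, mul_inv_cancel, one_mul]

lemma key_coboundary {η : G →* RingAut F} {f : G → G → Fˣ} {n : ℕ} (hn : 0 < n)
    (hord : orderOf σ = n) (hgen : ∀ g : G, g ∈ Subgroup.zpowers σ)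
    (hf : IsTwoCocycle η f) (x : Fˣ) (hx : Uf σ f n = cyclicNormHom η σ n x) :
    IsTwoCoboundary η f := by
  have hσn : σ ^ n = 1 := by rw [← hord]; exact pow_orderOf_eq_one σ
  set R : ℕ → Fˣ := fun i => f 1 1 * Xf η σ x i * (Uf σ f i)⁻¹ with hR
  have hRkey : ∀ i k : ℕ, f (σ ^ i) (σ ^ k) = R i * uact η (σ ^ i) (R k) * (R (i + k))⁻¹ := by
    intro i k
    have hfp := f_pow σ hf i k
    have hf2 : f (σ ^ i) (σ ^ k) = uact η (σ ^ i) (f 1 1) * Uf σ f (i + k) *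
        (Uf σ f i)⁻¹ * (uact η (σ ^ i) (Uf σ f k))⁻¹ := by
      rw [eq_mul_inv_iff_mul_eq, eq_mul_inv_iff_mul_eq, mul_right_comm]
      exact hfp
    have hXa := Xf_add η σ x i k
    rw [hR]
    simp only []
    rw [hf2, hXa, map_mul, map_mul, map_inv]
    rw [Units.ext_iff]
    simp only [Units.val_mul, Units.val_inv_eq_inv_val]
    field_simp
    ring_nf
    rw [mul_inv_cancel_right₀ (Units.ne_zero _)]
  have hRper : ∀ m, R (m + n) = R m := by
    intro m
    have h1 := Uf_add σ f hσn m
    have h2 := Xf_pd η σ hσn x m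
    rw [hR]
    simp only []
    have hxu : Xf η σ x n = Uf σ f n := by rw [← Xf_norm η σ n x, ← hx]
    rw [h1, h2, hxu]
    rw [Units.ext_iff]
    simp only [Units.val_mul, Units.val_inv_eq_inv_val]
    field_simp
  have hRq : ∀ q s, R (s + q * n) = R s := by
    intro q
    induction q with
    | zero => simp
    | succ q ih =>
      intro s
      have : s + (q + 1) * n = s + q * n + n := by ring
      rw [this, hRper, ih]
  have hRmod : ∀ a b : ℕ, a % n = b % n → R a = R b := by
    intro a b hab
    have ha : a % n + a / n * n = a := Nat.mod_add_div' a n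
    have hb : b % n + b / n * n = b := Nat.mod_add_div' b n
    rw [← ha, ← hb, hRq, hRq, hab]
  have hex : ∀ g : G, ∃ i : ℕ, σ ^ i = g := by
    intro g
    obtain ⟨m, rfl⟩ := Subgroup.mem_zpowers_iff.mp (hgen g)
    refine ⟨(m % (n : ℤ)).toNat, ?_⟩
    have hnz : (n : ℤ) ≠ 0 := by exact_mod_cast hn.ne'
    have h0 : (0 : ℤ) ≤ m % (n : ℤ) := Int.emod_nonneg m hnz
    rw [← zpow_natCast, Int.toNat_of_nonneg h0, ← hord]
    exact zpow_mod_orderOf σ m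
  choose e he using hex
  rw [isTwoCoboundary_iff_units]
  refine ⟨fun g => R (e g), fun g h => ?_⟩
  have hmod : e (g * h) % n = (e g + e h) % n := by
    have h3 : σ ^ e (g * h) = σ ^ (e g + e h) := by
      rw [pow_add, he, he, he]
    have := pow_eq_pow_iff_modEq.mp h3
    rwa [hord] at this
  calc f g h = f (σ ^ e g) (σ ^ e h) := by rw [he, he]
    _ = R (e g) * uact η (σ ^ e g) (R (e h)) * (R (e g + e h))⁻¹ := hRkey _ _
    _ = R (e g) * uact η g (R (e h)) * (R (e (g * h)))⁻¹ := by
        rw [he g, hRmod _ _ hmod]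

lemma std_cocycle {η : G →* RingAut F} {n : ℕ} (hn : 0 < n) (hord : orderOf σ = n)
    (e : G → ℕ) (he1 : ∀ g, e g < n) (he2 : ∀ g, σ ^ e g = g) (a : Fˣ)
    (ha : ∀ g : G, η g (a : F) = (a : F)) :
    IsTwoCocycle η (fun g h => a ^ (if n ≤ e g + e h then 1 else 0)) := by
  have emul : ∀ g h : G, e (g * h) % n = (e g + e h) % n := by
    intro g h
    have h3 : σ ^ e (g * h) = σ ^ (e g + e h) := by rw [pow_add, he2, he2, he2]
    have := pow_eq_pow_iff_modEq.mp h3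
    rwa [hord] at this
  have ecase : ∀ g h : G, e (g * h) = e g + e h ∨ e (g * h) + n = e g + e h := by
    intro g h
    have h1 := emul g h
    have h2 := he1 g
    have h3 := he1 h
    have h4 := he1 (g * h)
    rcases lt_or_ge (e g + e h) n with hlt | hle
    · left
      rw [Nat.mod_eq_of_lt h4, Nat.mod_eq_of_lt hlt] at h1
      exact h1
    · right
      have h5 : (e g + e h) % n = e g + e h - n := by
        rw [Nat.mod_eq_sub_mod hle, Nat.mod_eq_of_lt (by omega)]
      rw [Nat.mod_eq_of_lt h4, h5] at h1
      omega
  intro g h k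
  have hpow : ∀ (g' : G) (m : ℕ), η g' ((a ^ m : Fˣ) : F) = ((a ^ m : Fˣ) : F) := by
    intro g' m
    rw [Units.val_pow_eq_pow_val, map_pow, ha]
  simp only []
  rw [hpow, Units.val_pow_eq_pow_val, Units.val_pow_eq_pow_val, Units.val_pow_eq_pow_val,
    Units.val_pow_eq_pow_val, ← pow_add, ← pow_add]
  congr 1
  rcases ecase g h with h1 | h1 <;> rcases ecase h k with h2 | h2 <;>
    rcases ecase g (h * k) with h3 | h3 <;> rcases ecase (g * h) k with h4 | h4 <;>
    have := he1 g <;> have := he1 h <;> have := he1 k <;>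
    have := he1 (g * h) <;> have := he1 (h * k) <;>
    split_ifs <;> omega

lemma sum_indicator (n t : ℕ) (ht : t < n) :
    ∑ i ∈ Finset.range n, (if n ≤ i + t then 1 else 0) = t := by
  have h1 : Finset.filter (fun i => n ≤ i + t) (Finset.range n) = Finset.Ico (n - t) n := by
    ext i
    simp only [Finset.mem_filter, Finset.mem_range, Finset.mem_Ico]
    omega
  rw [Finset.sum_boole, h1, Nat.card_Ico, Nat.cast_id]
  omega

lemma std_beta {n : ℕ} (hn : 0 < n) (hord : orderOf σ = n)
    (e : G → ℕ) (he1 : ∀ g, e g < n) (he2 : ∀ g, σ ^ e g = g) (a : Fˣ) :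
    ∏ i ∈ Finset.range n, (fun g h : G => a ^ (if n ≤ e g + e h then 1 else 0)) (σ ^ i) σ
      = a ^ e σ := by
  have hei : ∀ i < n, e (σ ^ i) = i := by
    intro i hi
    have h3 : σ ^ e (σ ^ i) = σ ^ i := he2 (σ ^ i)
    have := pow_eq_pow_iff_modEq.mp h3
    rw [hord] at this
    rwa [Nat.ModEq, Nat.mod_eq_of_lt (he1 _), Nat.mod_eq_of_lt hi] at this
  calc ∏ i ∈ Finset.range n, (fun g h : G => a ^ (if n ≤ e g + e h then 1 else 0)) (σ ^ i) σ
      = ∏ i ∈ Finset.range n, a ^ (if n ≤ i + e σ then 1 else 0) := by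
        refine Finset.prod_congr rfl fun i hi => ?_
        rw [Finset.mem_range] at hi
        simp only [hei i hi]
    _ = a ^ ∑ i ∈ Finset.range n, (if n ≤ i + e σ then 1 else 0) := by
        rw [← Finset.prod_pow_eq_pow_sum]
    _ = a ^ e σ := by rw [sum_indicator n (e σ) (he1 σ)]

end CycAux


/-- for a cyclic group `C_n = ⟨σ⟩` of order `n` acting on a field `F`, two
2-cocycles `f₁, f₂` are cohomologous iff `β_{f₁}⁻¹ · β_{f₂}` lies in the image of the
norm map, where `β_f = ∏_{i=0}^{n-1} f(σ^i,σ)`; consequently `f ↦ β_f` induces a group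
isomorphism `H²_η(C_n, F^*) ≅ (F^*)^{C_n} / N(F^*)`. -/
theorem cohomologous_iff_norm_and_H2_iso {G F : Type*} [Group G] [Field F]
    (n : ℕ) (hn : 0 < n) (σ : G)
    (hgen : ∀ g : G, g ∈ Subgroup.zpowers σ) (hord : orderOf σ = n)
    (η : G →* RingAut F) :
    (∀ f₁ f₂ : G → G → Fˣ, IsTwoCocycle η f₁ → IsTwoCocycle η f₂ →
      (Cohomologous η f₁ f₂ ↔
        (∏ i ∈ Finset.range n, f₁ (σ ^ i) σ)⁻¹ * (∏ i ∈ Finset.range n, f₂ (σ ^ i) σ) ∈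
          (cyclicNormHom η σ n).range)) ∧
    (∃ Φ : H2 η ≃*
        (fixedUnits η ⧸ ((cyclicNormHom η σ n).range.subgroupOf (fixedUnits η))),
      ∀ (f : G → G → Fˣ) (hf : f ∈ twoCocycles η)
        (hβ : (∏ i ∈ Finset.range n, f (σ ^ i) σ) ∈ fixedUnits η),
        Φ (QuotientGroup.mk ⟨f, hf⟩) =
          QuotientGroup.mk ⟨∏ i ∈ Finset.range n, f (σ ^ i) σ, hβ⟩) := by
  classical
  have hσn : σ ^ n = 1 := by rw [← hord]; exact pow_orderOf_eq_one σ
  have hex : ∀ g : G, ∃ i : ℕ, i < n ∧ σ ^ i = g := by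
    intro g
    obtain ⟨m, rfl⟩ := Subgroup.mem_zpowers_iff.mp (hgen g)
    have hnz : (n : ℤ) ≠ 0 := by exact_mod_cast hn.ne'
    have h0 : (0 : ℤ) ≤ m % (n : ℤ) := Int.emod_nonneg m hnz
    have h1 : m % (n : ℤ) < (n : ℤ) := Int.emod_lt_of_pos m (by exact_mod_cast hn)
    refine ⟨(m % (n : ℤ)).toNat, by omega, ?_⟩
    rw [← zpow_natCast, Int.toNat_of_nonneg h0, ← hord]
    exact zpow_mod_orderOf σ m
  choose e he1 he2 using hex
  constructor
  · intro f₁ f₂ h₁ h₂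
    have hc' : IsTwoCocycle η (fun g h => f₁ g h * (f₂ g h)⁻¹) :=
      (twoCocycles η).mul_mem h₁ ((twoCocycles η).inv_mem h₂)
    have hU' : CycAux.Uf σ (fun g h => f₁ g h * (f₂ g h)⁻¹) n =
        (∏ i ∈ Finset.range n, f₁ (σ ^ i) σ) *
        (∏ i ∈ Finset.range n, f₂ (σ ^ i) σ)⁻¹ := by
      rw [CycAux.Uf, ← Finset.prod_inv_distrib, ← Finset.prod_mul_distrib]
    constructor
    · intro hcob
      obtain ⟨x, hx⟩ := CycAux.beta_of_coboundary σ hσn hcob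
      rw [hU'] at hx
      refine ⟨x⁻¹, ?_⟩
      rw [map_inv, ← hx, mul_inv, inv_inv, mul_comm]
    · rintro ⟨x, hx⟩
      refine CycAux.key_coboundary σ hn hord hgen hc' x⁻¹ ?_
      rw [hU', map_inv, hx, mul_inv, inv_inv, mul_comm]
  · haveI hN1 : ((twoCoboundaries η).subgroupOf (twoCocycles η)).Normal :=
      Subgroup.normal_of_comm _
    haveI hN2 : ((cyclicNormHom η σ n).range.subgroupOf (fixedUnits η)).Normal :=
      Subgroup.normal_of_comm _
    have hfix : ∀ f : G → G → Fˣ, f ∈ twoCocycles η →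
        (∏ i ∈ Finset.range n, f (σ ^ i) σ) ∈ fixedUnits η := by
      intro f hf g
      have h := CycAux.beta_fixed σ hσn hgen hf g
      calc η g (↑(∏ i ∈ Finset.range n, f (σ ^ i) σ))
          = ↑(CycAux.uact η g (CycAux.Uf σ f n)) := rfl
        _ = _ := by rw [h]; rfl
    set B : twoCocycles η →* fixedUnits η :=
      { toFun := fun f => ⟨∏ i ∈ Finset.range n, (f : G → G → Fˣ) (σ ^ i) σ, hfix f f.2⟩
        map_one' := by
          ext
          simp
        map_mul' := fun f₁ f₂ => by
          ext
          simp [Finset.prod_mul_distrib] } with hB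
    set ψ : (twoCocycles η : Subgroup (G → G → Fˣ)) →*
        (fixedUnits η ⧸ ((cyclicNormHom η σ n).range.subgroupOf (fixedUnits η))) :=
      (QuotientGroup.mk' _).comp B with hψ
    have hker : ∀ x ∈ (twoCoboundaries η).subgroupOf (twoCocycles η), ψ x = 1 := by
      rintro ⟨f, hf⟩ hx
      rw [Subgroup.mem_subgroupOf] at hx
      obtain ⟨y, hy⟩ := CycAux.beta_of_coboundary σ hσn hx
      rw [hψ]
      simp only [MonoidHom.comp_apply, QuotientGroup.mk'_apply]
      rw [QuotientGroup.eq_one_iff, Subgroup.mem_subgroupOf]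
      exact ⟨y, hy.symm⟩
    set Φ₀ := QuotientGroup.lift _ ψ hker with hΦ₀
    have hΦmk : ∀ a : (twoCocycles η : Subgroup (G → G → Fˣ)),
        Φ₀ (QuotientGroup.mk a) = ψ a := fun a => rfl
    have hinj : Function.Injective Φ₀ := by
      rw [injective_iff_map_eq_one]
      intro q
      refine QuotientGroup.induction_on q ?_
      rintro ⟨f, hf⟩ hq
      rw [hΦmk, hψ] at hq
      simp only [MonoidHom.comp_apply, QuotientGroup.mk'_apply] at hq
      rw [QuotientGroup.eq_one_iff, Subgroup.mem_subgroupOf] at hq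
      obtain ⟨x, hx⟩ := hq
      have hcob : IsTwoCoboundary η f :=
        CycAux.key_coboundary σ hn hord hgen hf x hx.symm
      rw [QuotientGroup.eq_one_iff, Subgroup.mem_subgroupOf]
      exact hcob
    have hsurj : Function.Surjective Φ₀ := by
      intro q
      refine QuotientGroup.induction_on q ?_
      rintro ⟨u, hu⟩
      have hca : IsTwoCocycle η (fun g h => u ^ (if n ≤ e g + e h then 1 else 0)) :=
        CycAux.std_cocycle σ hn hord e he1 he2 u hu
      refine ⟨QuotientGroup.mk ⟨_, hca⟩, ?_⟩
      rw [hΦmk, hψ]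
      simp only [MonoidHom.comp_apply, QuotientGroup.mk'_apply]
      have hβ : (∏ i ∈ Finset.range n,
          (fun g h : G => u ^ (if n ≤ e g + e h then 1 else 0)) (σ ^ i) σ) = u ^ e σ :=
        CycAux.std_beta σ hn hord e he1 he2 u
      rw [QuotientGroup.eq, Subgroup.mem_subgroupOf]
      simp only [Subgroup.coe_mul, InvMemClass.coe_inv]
      have hBv : ((B ⟨_, hca⟩ : fixedUnits η) : Fˣ) = u ^ e σ := hβ
      rw [hBv]
      rcases eq_or_lt_of_le (Nat.one_le_iff_ne_zero.mpr hn.ne') with h1 | h1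
      · have he0 : e σ = 0 := by have := he1 σ; omega
        rw [he0, pow_zero, inv_one, one_mul]
        refine ⟨u, ?_⟩
        have : cyclicNormHom η σ n u = CycAux.Xf η σ u n := rfl
        rw [this, CycAux.Xf, ← h1]
        simp only [Finset.prod_range_one, pow_zero]
        exact CycAux.uact_one η u
      · have he0 : e σ = 1 := by
          have h3 : σ ^ e σ = σ ^ 1 := by rw [pow_one]; exact he2 σ
          have := pow_eq_pow_iff_modEq.mp h3
          rw [hord] at this
          rwa [Nat.ModEq, Nat.mod_eq_of_lt (he1 σ), Nat.mod_eq_of_lt h1] at this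
        rw [he0, pow_one, inv_mul_cancel]
        exact one_mem _
    refine ⟨MulEquiv.ofBijective Φ₀ ⟨hinj, hsurj⟩, fun f hf hβ => ?_⟩
    show Φ₀ (QuotientGroup.mk ⟨f, hf⟩) = _
    rw [hΦmk, hψ]
    simp only [MonoidHom.comp_apply, QuotientGroup.mk'_apply]
    congr 1
end

section
/- Let q be a prime, let F_{q^r} be the field with q^r elements with Frobenius automorphism φ : x ↦ x^q, let k divide r and r/k divide n, and let the cyclic group C_n = ⟨σ⟩ act on F_{q^r} via η(σ) = φ^k. Then: (1) the elements of F_{q^r}^* fixed by this action form exactly the multiplicative group F_{q^k}^* of the subfield with q^k elements, a cyclic group of order q^k − 1; (2) for every x ∈ F_{q^r}^*, the norm N(x) = ∏_{i=0}^{n-1} σ^i(x) equals x^{((q^r−1)/(q^k−1)) · (nk/r)}; and (3) the image of the norm map is the subgroup of F_{q^k}^* of index gcd(q^k − 1, nk/r). -/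
lemma fixPowAux {F : Type*} [Field F] (f : RingAut F) (x : F) (h : f x = x) :
    ∀ j : ℤ, (f ^ j) x = x := by
  have hn : ∀ i : ℕ, (f ^ i) x = x := by
    intro i
    induction i with
    | zero => rfl
    | succ i ih =>
      have : (f ^ (i + 1)) x = (f ^ i) (f x) := by
        rw [pow_succ]; rfl
      rw [this, h, ih]
  intro j
  cases j with
  | ofNat i => simpa using hn i
  | negSucc i =>
    rw [zpow_negSucc]
    have hg := hn (i + 1)
    show (f ^ (i + 1)).symm x = x
    exact (f ^ (i + 1)).injective (by rw [RingEquiv.apply_symm_apply, hg])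

lemma auxCard {α : Type*} [Group α] [Finite α] [IsCyclic α] {d : ℕ} (hd : d ∣ Nat.card α)
    (H : Subgroup α) (hH : ∀ x, x ∈ H ↔ x ^ d = 1) : Nat.card H = d := by
  obtain ⟨g, hg⟩ := IsCyclic.exists_generator (α := α)
  have hog : orderOf g = Nat.card α := orderOf_eq_card_of_forall_mem_zpowers hg
  have hN0 : 0 < Nat.card α := Nat.card_pos
  rcases Nat.eq_zero_or_pos d with rfl | hd0
  · exact absurd (Nat.eq_zero_of_zero_dvd hd) hN0.ne'
  have hcd : Nat.card α / d * d = Nat.card α := Nat.div_mul_cancel hd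
  have key : H = Subgroup.zpowers (g ^ (Nat.card α / d)) := by
    apply le_antisymm
    · intro x hx
      obtain ⟨j, rfl⟩ := (Submonoid.mem_powers_iff _ _).mp
        ((isOfFinOrder_of_finite g).mem_powers_iff_mem_zpowers.mpr (hg x))
      have h1 : orderOf g ∣ j * d := orderOf_dvd_of_pow_eq_one (by
        rw [pow_mul]; exact (hH _).mp hx)
      rw [hog, ← hcd] at h1
      obtain ⟨s, rfl⟩ := (Nat.mul_dvd_mul_iff_right hd0).mp h1
      have : (g ^ (Nat.card α / d)) ^ s ∈ Subgroup.zpowers (g ^ (Nat.card α / d)) :=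
        Subgroup.pow_mem _ (Subgroup.mem_zpowers _) s
      rwa [← pow_mul] at this
    · rw [Subgroup.zpowers_le, hH, ← pow_mul, hcd, ← hog, pow_orderOf_eq_one]
  rw [key, Nat.card_zpowers, orderOf_pow, hog,
    Nat.gcd_eq_right (Nat.div_dvd_of_dvd hd), Nat.div_div_self hd hN0.ne']

lemma auxRange {α : Type*} [Group α] [Finite α] [IsCyclic α] (E : ℕ) (f : α →* α)
    (hf : ∀ x, f x = x ^ E) : Nat.card f.range = Nat.card α / Nat.gcd (Nat.card α) E := by
  obtain ⟨g, hg⟩ := IsCyclic.exists_generator (α := α)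
  have hog : orderOf g = Nat.card α := orderOf_eq_card_of_forall_mem_zpowers hg
  have key : f.range = Subgroup.zpowers (g ^ E) := by
    apply le_antisymm
    · rintro _ ⟨x, rfl⟩
      obtain ⟨j, rfl⟩ := (Submonoid.mem_powers_iff _ _).mp
        ((isOfFinOrder_of_finite g).mem_powers_iff_mem_zpowers.mpr (hg x))
      rw [hf, ← pow_mul, mul_comm, pow_mul]
      exact Subgroup.pow_mem _ (Subgroup.mem_zpowers _) j
    · rw [Subgroup.zpowers_le]
      exact ⟨g, hf g⟩
  rw [key, Nat.card_zpowers, orderOf_pow, hog]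

lemma auxGeom (Q m : ℕ) (hQ : 1 ≤ Q) :
    (∑ j ∈ Finset.range m, Q ^ j) * (Q - 1) = Q ^ m - 1 := by
  have h2 : (1 : ℕ) ≤ Q ^ m := Nat.one_le_pow _ _ hQ
  zify [hQ, h2]
  push_cast
  exact geom_sum_mul (Q : ℤ) m

lemma auxMod (Q m t : ℕ) (hQ : 1 ≤ Q) :
    (∑ i ∈ Finset.range (m * t), Q ^ i) ≡ t * ∑ j ∈ Finset.range m, Q ^ j [MOD Q ^ m - 1] := by
  induction t with
  | zero => simp [Nat.ModEq.refl]
  | succ t ih =>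
    have hQm : (Q : ℕ) ^ m ≡ 1 [MOD Q ^ m - 1] :=
      ((Nat.modEq_iff_dvd' (Nat.one_le_pow _ _ hQ)).mpr dvd_rfl).symm
    have h1 : Q ^ (m * t) ≡ 1 [MOD Q ^ m - 1] := by
      calc Q ^ (m * t) = (Q ^ m) ^ t := by rw [pow_mul]
        _ ≡ 1 ^ t [MOD Q ^ m - 1] := hQm.pow t
        _ = 1 := one_pow t
    calc ∑ i ∈ Finset.range (m * (t + 1)), Q ^ i
        = (∑ i ∈ Finset.range (m * t), Q ^ i) + ∑ j ∈ Finset.range m, Q ^ (m * t + j) := by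
          rw [Nat.mul_succ, Finset.sum_range_add]
      _ = (∑ i ∈ Finset.range (m * t), Q ^ i)
          + Q ^ (m * t) * ∑ j ∈ Finset.range m, Q ^ j := by
          rw [Finset.mul_sum]; congr 1; exact Finset.sum_congr rfl fun j _ => pow_add Q _ _
      _ ≡ t * (∑ j ∈ Finset.range m, Q ^ j) + 1 * ∑ j ∈ Finset.range m, Q ^ j
          [MOD Q ^ m - 1] := ih.add (h1.mul_right _)
      _ = (t + 1) * ∑ j ∈ Finset.range m, Q ^ j := by ring


/-- let the cyclic group `C_n = ⟨σ⟩` act on the field `F = F_{q^r}` with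
`q^r` elements via `η(σ) = φ^k` (`φ` the Frobenius, `k ∣ r`, `(r/k) ∣ n`). Then (1) the
fixed elements of `F^*` form exactly the multiplicative group of the subfield with
`q^k` elements, a cyclic group of order `q^k - 1`; (2) the norm of `x` equals
`x^{((q^r-1)/(q^k-1))·(nk/r)}`; (3) the image of the norm map is the subgroup of
`F_{q^k}^*` of index `gcd(q^k - 1, nk/r)`. -/
theorem frobenius_fixed_and_norm {G F : Type*} [Group G] [Field F] [Fintype F]
    (q r k n : ℕ) (hq : q.Prime) (hr : 0 < r) (hk : 0 < k) (hn : 0 < n)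
    (hkr : k ∣ r) (hrkn : r / k ∣ n)
    (hF : Fintype.card F = q ^ r)
    (σ : G) (hgen : ∀ g : G, g ∈ Subgroup.zpowers σ) (hord : orderOf σ = n)
    (η : G →* RingAut F) (hη : ∀ x : F, η σ x = x ^ q ^ k) :
    (∀ x : Fˣ, x ∈ fixedUnits η ↔ (x : F) ^ q ^ k = (x : F)) ∧
    Nat.card (fixedUnits η) = q ^ k - 1 ∧
    IsCyclic (fixedUnits η) ∧
    (∀ x : Fˣ, cyclicNormHom η σ n x = x ^ ((q ^ r - 1) / (q ^ k - 1) * (n * k / r))) ∧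
    (cyclicNormHom η σ n).range ≤ fixedUnits η ∧
    (cyclicNormHom η σ n).range.relIndex (fixedUnits η) =
      Nat.gcd (q ^ k - 1) (n * k / r) := by
  have hq2 : 2 ≤ q := hq.two_le
  set Q := q ^ k with hQdef
  have hQ1 : 1 < Q := Nat.one_lt_pow hk.ne' hq2
  obtain ⟨m, hm⟩ := hkr
  have hm0 : 0 < m := by
    rcases Nat.eq_zero_or_pos m with rfl | h
    · rw [hm, mul_zero] at hr; exact absurd rfl hr.ne
    · exact h
  have hrk : r / k = m := by rw [hm, Nat.mul_div_cancel_left _ hk]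
  rw [hrk] at hrkn
  obtain ⟨t, ht⟩ := hrkn
  have ht0 : 0 < t := by
    rcases Nat.eq_zero_or_pos t with rfl | h
    · rw [ht, mul_zero] at hn; exact absurd rfl hn.ne
    · exact h
  have htval : n * k / r = t := by
    rw [hm, ht, mul_comm k m]
    rw [mul_comm m t, mul_assoc, mul_comm t (m * k), Nat.mul_div_cancel_left _ (by positivity)]
  have hNQ : q ^ r = Q ^ m := by rw [hQdef, ← pow_mul, hm]
  set N := q ^ r - 1 with hNdef
  set d := Q - 1 with hddef
  have hd0 : 0 < d := by omega
  have hN0 : 0 < N := by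
    have : 1 < q ^ r := Nat.one_lt_pow hr.ne' hq2
    omega
  set Gs := ∑ j ∈ Finset.range m, Q ^ j with hGdef
  have hG : Gs * d = N := by rw [hGdef, hddef, hNdef, auxGeom Q m hQ1.le, hNQ]
  have hGs0 : 0 < Gs := by
    rcases Nat.eq_zero_or_pos Gs with h | h
    · rw [h, zero_mul] at hG; omega
    · exact h
  have hdN : d ∣ N := Dvd.intro_left _ hG
  have hGval : N / d = Gs := by
    rw [← hG, Nat.mul_div_cancel _ hd0]
  have hcard : Nat.card Fˣ = N := by
    classical
    rw [Nat.card_eq_fintype_card, Fintype.card_units, hF]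
  -- eta on powers
  have hpow : ∀ (i : ℕ) (x : F), ((η σ) ^ i) x = x ^ Q ^ i := by
    intro i
    induction i with
    | zero => intro x; rw [pow_zero, pow_zero, pow_one]; rfl
    | succ i ih =>
      intro x
      have h1 : ((η σ) ^ (i + 1)) x = ((η σ) ^ i) (η σ x) := by rw [pow_succ]; rfl
      rw [h1, hη, ih, ← pow_mul, ← pow_succ']
  have hησ : ∀ (i : ℕ) (x : F), η (σ ^ i) x = x ^ Q ^ i := by
    intro i x; rw [map_pow]; exact hpow i x
  -- part 1
  have part1 : ∀ x : Fˣ, x ∈ fixedUnits η ↔ (x : F) ^ Q = (x : F) := by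
    intro x
    constructor
    · intro hx
      have := hx σ
      rwa [hη] at this
    · intro hx g
      obtain ⟨j, rfl⟩ := hgen g
      rw [map_zpow]
      exact fixPowAux (η σ) x (by rw [hη]; exact hx) j
  -- units version
  have hd1 : ∀ x : Fˣ, (x : F) ^ Q = (x : F) ↔ x ^ d = 1 := by
    intro x
    have hQ' : d + 1 = Q := by omega
    constructor
    · intro hx
      ext
      push_cast
      have : (x : F) ^ d * x = 1 * (x : F) := by
        rw [one_mul, ← pow_succ, hQ', hx]
      exact mul_right_cancel₀ x.ne_zero this
    · intro hx
      have hx' : (x : F) ^ d = 1 := by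
        have := congrArg (Units.val) hx
        simpa using this
      rw [← hQ', pow_succ, hx', one_mul]
  have hfix : ∀ x : Fˣ, x ∈ fixedUnits η ↔ x ^ d = 1 := fun x => (part1 x).trans (hd1 x)
  -- norm = pow
  have part4 : ∀ x : Fˣ, cyclicNormHom η σ n x = x ^ (Gs * t) := by
    intro x
    have h1 : cyclicNormHom η σ n x = ∏ i ∈ Finset.range n, x ^ Q ^ i := by
      show (∏ i ∈ Finset.range n, Units.map (η (σ ^ i)).toMonoidHom x) = _
      refine Finset.prod_congr rfl fun i _ => ?_
      ext
      push_cast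
      exact hησ i x
    rw [h1, Finset.prod_pow_eq_pow_sum]
    have hmod : (∑ i ∈ Finset.range n, Q ^ i) ≡ Gs * t [MOD orderOf x] := by
      have h2 : (∑ i ∈ Finset.range (m * t), Q ^ i) ≡ t * Gs [MOD Q ^ m - 1] :=
        auxMod Q m t hQ1.le
      rw [← ht] at h2
      have h3 : Q ^ m - 1 = N := by rw [hNdef, hNQ]
      rw [h3, mul_comm t Gs] at h2
      exact h2.of_dvd (hcard ▸ orderOf_dvd_natCard x)
    exact (pow_eq_pow_iff_modEq).mpr hmod
  have part4' : ∀ x : Fˣ, cyclicNormHom η σ n x =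
      x ^ ((q ^ r - 1) / (q ^ k - 1) * (n * k / r)) := by
    intro x
    rw [part4 x, htval, hGval]
  -- range ≤ fixed
  have hle : (cyclicNormHom η σ n).range ≤ fixedUnits η := by
    rintro _ ⟨x, rfl⟩
    rw [hfix, part4]
    have hxN : x ^ N = 1 := by rw [← hcard]; exact pow_card_eq_one'
    have he : Gs * t * d = N * t := by rw [← hG]; ring
    rw [← pow_mul, he, pow_mul, hxN, one_pow]
  -- relindex
  have hcyc : IsCyclic (fixedUnits η) := inferInstance
  have hcardFix : Nat.card (fixedUnits η) = d := by
    refine auxCard ?_ (fixedUnits η) hfix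
    rw [hcard]; exact hdN
  have hcardRange : Nat.card (cyclicNormHom η σ n).range = d / Nat.gcd d t := by
    rw [auxRange (Gs * t) _ part4, hcard, ← hG, mul_comm Gs d]
    have : Nat.gcd (d * Gs) (Gs * t) = Gs * Nat.gcd d t := by
      rw [mul_comm d Gs, Nat.gcd_mul_left]
    rw [this, mul_comm d Gs, Nat.mul_div_mul_left _ _ hGs0]
  have hrelindex : (cyclicNormHom η σ n).range.relIndex (fixedUnits η) = Nat.gcd d t := by
    have key : (cyclicNormHom η σ n).range.relIndex (fixedUnits η) *
        Nat.card (cyclicNormHom η σ n).range = Nat.card (fixedUnits η) := by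
      rw [Subgroup.relIndex]
      have := Subgroup.index_mul_card ((cyclicNormHom η σ n).range.subgroupOf (fixedUnits η))
      rw [Nat.card_congr (Subgroup.subgroupOfEquivOfLe hle).toEquiv] at this
      exact this
    rw [hcardRange, hcardFix] at key
    have hgd : Nat.gcd d t ∣ d := Nat.gcd_dvd_left d t
    have hq0 : 0 < d / Nat.gcd d t := Nat.div_pos (Nat.le_of_dvd hd0 hgd) (by
      exact Nat.gcd_pos_of_pos_left t hd0)
    have heq : Nat.gcd d t * (d / Nat.gcd d t) = d := Nat.mul_div_cancel' hgd
    exact Nat.eq_of_mul_eq_mul_right hq0 (key.trans heq.symm)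
  refine ⟨part1, hcardFix, hcyc, part4', hle, ?_⟩
  rw [hrelindex, htval]
end

section
/- Let q be a prime, let F_{q^r} be the field with q^r elements with Frobenius automorphism φ : x ↦ x^q, let k divide r and r/k divide n, and let the cyclic group C_n = ⟨σ⟩ act on F_{q^r} via η(σ) = φ^k. Then the group H²_η(C_n, F_{q^r}^*) of 2-cocycles modulo 2-coboundaries for this action is a cyclic group of order gcd(q^k − 1, nk/r). -/
namespace H2Aux

variable {G F : Type*} [Group G] [Field F] (η : G →* RingAut F)

/-- The action of `G` on `Fˣ` induced by `η`. -/
def act (g : G) : Fˣ →* Fˣ := Units.map (η g).toMonoidHom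

@[simp] lemma coe_act (g : G) (x : Fˣ) : ((act η g x : Fˣ) : F) = η g (x : F) := rfl

@[simp] lemma act_one (x : Fˣ) : act η 1 x = x := by
  ext; rw [coe_act, map_one]; rfl

lemma act_mul (g h : G) (x : Fˣ) : act η (g * h) x = act η g (act η h x) := by
  ext; simp only [coe_act, map_mul]; rfl

lemma isTwoCocycle_iff (f : G → G → Fˣ) :
    IsTwoCocycle η f ↔ ∀ g h k : G,
      act η g (f h k) * f g (h * k) = f g h * f (g * h) k := by
  constructor
  · intro hf g h k
    rw [Units.ext_iff]; push_cast; rw [coe_act]; exact hf g h k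
  · intro hf g h k
    have := hf g h k
    rw [Units.ext_iff] at this; push_cast at this
    exact this

lemma isTwoCoboundary_iff (f : G → G → Fˣ) :
    IsTwoCoboundary η f ↔ ∃ r : G → Fˣ, ∀ g h : G,
      f g h = r g * act η g (r h) * (r (g * h))⁻¹ := by
  constructor
  · rintro ⟨r, hr⟩
    refine ⟨r, fun g h => ?_⟩
    rw [Units.ext_iff]
    simp only [Units.val_mul, Units.val_inv_eq_inv_val, coe_act]
    have := hr g h
    simpa [Units.val_inv_eq_inv_val] using this
  · rintro ⟨r, hr⟩
    refine ⟨r, fun g h => ?_⟩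
    have := hr g h
    rw [Units.ext_iff] at this
    simpa [Units.val_inv_eq_inv_val] using this

section Cocycle

variable {η} {f : G → G → Fˣ}
  (hf : ∀ g h k : G, act η g (f h k) * f g (h * k) = f g h * f (g * h) k)

include hf

lemma cocycle_one_left (h : G) : f 1 h = f 1 1 := by
  have h3 := hf 1 1 h
  simp only [act_one, one_mul] at h3
  exact mul_right_cancel h3

lemma cocycle_one_right (g : G) : f g 1 = act η g (f 1 1) := by
  have h1 := hf g 1 1
  simp only [one_mul, mul_one] at h1
  -- h1 : act η g (f 1 1) * f g 1 = f g 1 * f g 1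
  rw [mul_comm (f g 1) (f g 1)] at h1
  exact (mul_right_cancel h1).symm

end Cocycle

end H2Aux

namespace H2Aux

lemma cancel_aux {M : Type*} [CommGroup M] {x y A B : M} (h : x = A * y * (B * A)⁻¹ * x) :
    y = B := by
  have h1 : (1 : M) * x = A * y * (B * A)⁻¹ * x := by rw [one_mul]; exact h
  have h2 := (mul_right_cancel h1).symm
  have h3 : A * y = B * A := by
    have h4 := mul_eq_one_iff_eq_inv.mp h2
    rwa [inv_inv] at h4
  rw [mul_comm B A] at h3
  exact mul_left_cancel h3

lemma cancel_aux2 {M : Type*} [CommGroup M] {x y B C : M}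
    (h : x = y⁻¹ * (B * C) * C⁻¹ * x) : y = B := by
  have h1 : (1 : M) * x = y⁻¹ * (B * C) * C⁻¹ * x := by rw [one_mul]; exact h
  have h2 := (mul_right_cancel h1).symm
  have h3 : y⁻¹ * (B * C) * C⁻¹ = y⁻¹ * B := by
    simp [mul_comm, mul_assoc, mul_left_comm]
  rw [h3] at h2
  exact inv_mul_eq_one.mp h2

variable {G F : Type*} [Group G] [Field F] (η : G →* RingAut F) (σ : G)

/-- Partial products of the cocycle along powers of `σ`. -/
def bb (f : G → G → Fˣ) (j : ℕ) : Fˣ := ∏ i ∈ Finset.range j, f (σ ^ i) σ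

@[simp] lemma bb_zero (f : G → G → Fˣ) : bb σ f 0 = 1 := Finset.prod_range_zero _

lemma bb_succ (f : G → G → Fˣ) (j : ℕ) : bb σ f (j + 1) = bb σ f j * f (σ ^ j) σ :=
  Finset.prod_range_succ _ _

lemma bb_mul (f f' : G → G → Fˣ) (j : ℕ) :
    bb σ (f * f') j = bb σ f j * bb σ f' j := by
  simp [bb, Finset.prod_mul_distrib]

/-- Partial "norm products" of a unit along powers of `σ`. -/
def uu (u : Fˣ) (j : ℕ) : Fˣ := ∏ i ∈ Finset.range j, act η (σ ^ i) u

lemma uu_add (u : Fˣ) (a b : ℕ) :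
    uu η σ u (a + b) = uu η σ u a * act η (σ ^ a) (uu η σ u b) := by
  simp only [uu, map_prod]
  rw [Finset.prod_range_add]
  congr 1
  refine Finset.prod_congr rfl fun i _ => ?_
  rw [pow_add, act_mul]

section Shift

variable {σ : G} {n : ℕ} (hσn : σ ^ n = 1)
include hσn

lemma prod_shift (r : G → Fˣ) :
    ∏ i ∈ Finset.range n, r (σ ^ (i + 1)) = ∏ i ∈ Finset.range n, r (σ ^ i) := by
  have h1 := Finset.prod_range_succ' (fun i => r (σ ^ i)) n
  have h2 := Finset.prod_range_succ (fun i => r (σ ^ i)) n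
  rw [h1] at h2
  simp only [pow_zero] at h2
  rw [hσn] at h2
  exact mul_right_cancel h2

lemma bb_n_add (f : G → G → Fˣ) (j : ℕ) : bb σ f (n + j) = bb σ f n * bb σ f j := by
  rw [bb, Finset.prod_range_add]
  congr 1
  refine Finset.prod_congr rfl fun i _ => ?_
  rw [pow_add, hσn, one_mul]

lemma uu_n_add (u : Fˣ) (j : ℕ) : uu η σ u (n + j) = uu η σ u n * uu η σ u j := by
  rw [uu, Finset.prod_range_add]
  congr 1
  refine Finset.prod_congr rfl fun i _ => ?_
  rw [pow_add, hσn, one_mul]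

end Shift

section Cocycle

variable {η} {σ : G} {n : ℕ} {f : G → G → Fˣ}
  (hf : ∀ g h k : G, act η g (f h k) * f g (h * k) = f g h * f (g * h) k)

include hf

lemma cocycle_key (a b : ℕ) :
    f (σ ^ a) (σ ^ b) =
      (act η (σ ^ a) (bb σ f b))⁻¹ * bb σ f (a + b) * (bb σ f a)⁻¹ * act η (σ ^ a) (f 1 1) := by
  induction b with
  | zero =>
      rw [pow_zero, cocycle_one_right hf, bb_zero, map_one, add_zero]
      simp [mul_comm, mul_assoc, mul_left_comm]
  | succ b ih =>
      have H := hf (σ ^ a) (σ ^ b) σ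
      rw [← pow_succ, ← pow_add] at H
      have hstep : f (σ ^ a) (σ ^ (b + 1)) =
          (act η (σ ^ a) (f (σ ^ b) σ))⁻¹ * (f (σ ^ a) (σ ^ b) * f (σ ^ (a + b)) σ) := by
        rw [← H]; group
      rw [hstep, ih, ← add_assoc, bb_succ, bb_succ, map_mul, mul_inv]
      simp [mul_comm, mul_assoc, mul_left_comm]

variable (hσn : σ ^ n = 1)
include hσn

lemma act_bb_n (a : ℕ) : act η (σ ^ a) (bb σ f n) = bb σ f n := by
  have hkey := cocycle_key (σ := σ) hf a n
  rw [hσn, cocycle_one_right hf] at hkey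
  have h2 : bb σ f (a + n) = bb σ f n * bb σ f a := by
    rw [add_comm]; exact bb_n_add hσn f a
  rw [h2] at hkey
  exact cancel_aux2 hkey

end Cocycle

end H2Aux


namespace H2Aux

variable {G F : Type*} [Group G] [Field F] {η : G →* RingAut F} {σ : G} {n : ℕ}

lemma fixed_zpow (e : RingAut F) (x : F) (hx : e x = x) : ∀ m : ℤ, (e ^ m) x = x := by
  have hnat : ∀ m : ℕ, (e ^ m) x = x := by
    intro m
    induction m with
    | zero => rfl
    | succ m ih =>
        rw [pow_succ]
        show (e ^ m) (e x) = x
        rw [hx]; exact ih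
  intro m
  rcases m with m | m
  · exact hnat m
  · rw [zpow_negSucc]
    have h5 : (e ^ (m + 1))⁻¹ ((e ^ (m + 1)) x) = x := by
      show ((e ^ (m + 1))⁻¹ * e ^ (m + 1)) x = x
      rw [inv_mul_cancel]
      rfl
    rw [hnat (m + 1)] at h5
    exact h5

lemma fixed_all (hgen : ∀ g : G, g ∈ Subgroup.zpowers σ) {x : Fˣ}
    (hx : act η σ x = x) (g : G) : η g (x : F) = (x : F) := by
  obtain ⟨m, rfl⟩ := Subgroup.mem_zpowers_iff.mp (hgen g)
  rw [map_zpow]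
  exact fixed_zpow (η σ) (x : F) (congrArg Units.val hx) m

lemma coboundary_bb_n (hσn : σ ^ n = 1) {f : G → G → Fˣ} (r : G → Fˣ)
    (hfr : ∀ g h, f g h = r g * act η g (r h) * (r (g * h))⁻¹) :
    bb σ f n = cyclicNormHom η σ n (r σ) := by
  have hN : cyclicNormHom η σ n (r σ) = ∏ i ∈ Finset.range n, act η (σ ^ i) (r σ) := rfl
  calc bb σ f n = (∏ i ∈ Finset.range n, r (σ ^ i)) *
        (∏ i ∈ Finset.range n, act η (σ ^ i) (r σ)) *
        (∏ i ∈ Finset.range n, r (σ ^ (i + 1)))⁻¹ := by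
          rw [bb, ← Finset.prod_inv_distrib, ← Finset.prod_mul_distrib,
            ← Finset.prod_mul_distrib]
          refine Finset.prod_congr rfl fun i _ => ?_
          rw [hfr (σ ^ i) σ, pow_succ]
    _ = cyclicNormHom η σ n (r σ) := by
          rw [prod_shift hσn r, hN]
          simp [mul_comm, mul_assoc, mul_left_comm]

/-- The normalizing 1-cochain used to trivialize a cocycle whose invariant is a norm. -/
def rho (η : G →* RingAut F) (σ : G) (f : G → G → Fˣ) (u : Fˣ) (j : ℕ) : Fˣ :=
  (bb σ f j)⁻¹ * uu η σ u j * f 1 1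

section Rho

variable (hσn : σ ^ n = 1) {f : G → G → Fˣ} {u : Fˣ} (hu : bb σ f n = uu η σ u n)
include hσn hu

lemma rho_n_add (j : ℕ) : rho η σ f u (n + j) = rho η σ f u j := by
  rw [rho, rho, bb_n_add hσn, uu_n_add η hσn, hu, mul_inv]
  rw [Units.ext_iff]
  simp only [Units.val_mul, Units.val_inv_eq_inv_val]
  field_simp

lemma rho_add_mul (t j : ℕ) : rho η σ f u (j + n * t) = rho η σ f u j := by
  induction t with
  | zero => simp
  | succ t ih =>
      have hidx : j + n * (t + 1) = n + (j + n * t) := by ring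
      rw [hidx, rho_n_add hσn hu, ih]

lemma rho_congr {a b : ℕ} (hab : a ≡ b [MOD n]) : rho η σ f u a = rho η σ f u b := by
  rcases le_total a b with h | h
  · obtain ⟨t, ht⟩ := (Nat.modEq_iff_dvd' h).mp hab
    have hb : b = a + n * t := by rw [← ht]; exact (Nat.add_sub_cancel' h).symm
    rw [hb, rho_add_mul hσn hu]
  · obtain ⟨t, ht⟩ := (Nat.modEq_iff_dvd' h).mp hab.symm
    have ha : a = b + n * t := by rw [← ht]; exact (Nat.add_sub_cancel' h).symm
    rw [ha, rho_add_mul hσn hu]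

lemma isTwoCoboundary_of_bb_eq (hord : orderOf σ = n)
    (hf : ∀ g h k : G, act η g (f h k) * f g (h * k) = f g h * f (g * h) k)
    (e : G → ℕ) (he : ∀ g, σ ^ e g = g) :
    ∃ r : G → Fˣ, ∀ g h : G, f g h = r g * act η g (r h) * (r (g * h))⁻¹ := by
  refine ⟨fun g => rho η σ f u (e g), fun g h => ?_⟩
  have hg := he g
  have hh := he h
  have hab : e (g * h) ≡ e g + e h [MOD n] := by
    have hpow : σ ^ e (g * h) = σ ^ (e g + e h) := by
      rw [pow_add, hg, hh, he (g * h)]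
    have := pow_eq_pow_iff_modEq.mp hpow
    rwa [hord] at this
  have hrw : rho η σ f u (e (g * h)) = rho η σ f u (e g + e h) :=
    rho_congr hσn hu hab
  show f g h = rho η σ f u (e g) * act η g (rho η σ f u (e h)) *
      (rho η σ f u (e (g * h)))⁻¹
  rw [hrw]
  have hS : f (σ ^ e g) (σ ^ e h) = rho η σ f u (e g) *
      act η (σ ^ e g) (rho η σ f u (e h)) * (rho η σ f u (e g + e h))⁻¹ := by
    rw [cocycle_key hf (e g) (e h), rho, rho, rho, uu_add η σ, map_mul, map_mul, map_inv,
      mul_inv, mul_inv, mul_inv, inv_inv]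
    rw [Units.ext_iff]
    simp only [Units.val_mul, Units.val_inv_eq_inv_val]
    field_simp
    ring
    rw [mul_inv_cancel_right₀ (Units.ne_zero _)]
  rw [hg, hh] at hS
  exact hS

end Rho

end H2Aux

namespace H2Aux

section Std

variable {G F : Type*} [Group G] [Field F] {η : G →* RingAut F} {σ : G} {n : ℕ}
variable (hn : 0 < n) (hord : orderOf σ = n)
  (e : G → ℕ) (he : ∀ g, σ ^ e g = g) (helt : ∀ g, e g < n)

include hord he

lemma e_modeq (g h : G) : e (g * h) ≡ e g + e h [MOD n] := by
  have hpow : σ ^ e (g * h) = σ ^ (e g + e h) := by rw [pow_add, he, he, he]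
  have h2 := pow_eq_pow_iff_modEq.mp hpow
  rwa [hord] at h2

include helt

lemma e_le (g h : G) : e (g * h) ≤ e g + e h := by
  have h1 : e (g * h) % n = (e g + e h) % n := e_modeq hord e he g h
  rw [Nat.mod_eq_of_lt (helt (g * h))] at h1
  rw [h1]; exact Nat.mod_le _ _

lemma n_dvd_sub (g h : G) : n ∣ e g + e h - e (g * h) :=
  (Nat.modEq_iff_dvd' (e_le hord e he helt g h)).mp (e_modeq hord e he g h)

end Std

/-- The exponent of the standard cocycle. -/
def cc {G : Type*} [Group G] (e : G → ℕ) (n : ℕ) (g h : G) : ℕ :=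
  (e g + e h - e (g * h)) / n

/-- The standard cocycle attached to a fixed unit `a`. -/
def stdC {G F : Type*} [Group G] [Field F] (a : Fˣ) (e : G → ℕ) (n : ℕ) : G → G → Fˣ :=
  fun g h => a ^ cc e n g h

section Std2

variable {G F : Type*} [Group G] [Field F] {η : G →* RingAut F} {σ : G} {n : ℕ}
variable (hn : 0 < n) (hord : orderOf σ = n)
  (e : G → ℕ) (he : ∀ g, σ ^ e g = g) (helt : ∀ g, e g < n)

include hord he helt

lemma n_mul_cc (g h : G) : n * cc e n g h = e g + e h - e (g * h) :=
  Nat.mul_div_cancel' (n_dvd_sub hord e he helt g h)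

include hn

lemma cc_add (g h k : G) :
    cc e n h k + cc e n g (h * k) = cc e n g h + cc e n (g * h) k := by
  apply Nat.eq_of_mul_eq_mul_left hn
  rw [Nat.mul_add, Nat.mul_add, n_mul_cc hord e he helt, n_mul_cc hord e he helt,
    n_mul_cc hord e he helt, n_mul_cc hord e he helt]
  have l1 := e_le hord e he helt g h
  have l2 := e_le hord e he helt (g * h) k
  have l3 := e_le hord e he helt h k
  have l4 := e_le hord e he helt g (h * k)
  rw [mul_assoc] at l2
  rw [mul_assoc]
  omega

lemma stdC_cocycle {a : Fˣ} (ha : ∀ g : G, act η g a = a) :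
    ∀ g h k : G, act η g (stdC a e n h k) * stdC a e n g (h * k) =
      stdC a e n g h * stdC a e n (g * h) k := by
  intro g h k
  have h1 : act η g (stdC a e n h k) = stdC a e n h k := by
    show act η g (a ^ cc e n h k) = a ^ cc e n h k
    rw [map_pow, ha]
  rw [h1]
  show a ^ cc e n h k * a ^ cc e n g (h * k) = a ^ cc e n g h * a ^ cc e n (g * h) k
  rw [← pow_add, ← pow_add, cc_add hn hord e he helt]

omit hn in
lemma e_eq_of {g : G} {j : ℕ} (hj : j < n) (hg : σ ^ j = g) : e g = j := by
  have h1 : σ ^ e g = σ ^ j := by rw [he, hg]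
  have h2 := pow_eq_pow_iff_modEq.mp h1
  rw [hord] at h2
  have h3 : e g % n = j % n := h2
  rwa [Nat.mod_eq_of_lt (helt g), Nat.mod_eq_of_lt hj] at h3

lemma bb_stdC (hn2 : 1 < n) (a : Fˣ) : bb σ (stdC a e n) n = a := by
  have hσn : σ ^ n = 1 := by rw [← hord]; exact pow_orderOf_eq_one σ
  have he1 : e (1 : G) = 0 := e_eq_of hord e he helt hn (pow_zero σ)
  have heσ : e σ = 1 := e_eq_of hord e he helt hn2 (pow_one σ)
  have hei : ∀ i, i < n → e (σ ^ i) = i := fun i hi => e_eq_of hord e he helt hi rfl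
  obtain ⟨m, rfl⟩ : ∃ m, n = m + 1 := ⟨n - 1, by omega⟩
  rw [bb, Finset.prod_range_succ]
  have hz : ∀ i ∈ Finset.range m, stdC a e (m + 1) (σ ^ i) σ = 1 := by
    intro i hi
    rw [Finset.mem_range] at hi
    have hcc : cc e (m + 1) (σ ^ i) σ = 0 := by
      have h2 := n_mul_cc hord e he helt (σ ^ i) σ
      rw [hei i (by omega), heσ, ← pow_succ, hei (i + 1) (by omega)] at h2
      apply Nat.eq_of_mul_eq_mul_left (Nat.succ_pos m)
      rw [h2]; omega
    show a ^ cc e (m + 1) (σ ^ i) σ = 1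
    rw [hcc, pow_zero]
  have hlast : stdC a e (m + 1) (σ ^ m) σ = a := by
    have hcc : cc e (m + 1) (σ ^ m) σ = 1 := by
      have h2 := n_mul_cc hord e he helt (σ ^ m) σ
      rw [hei m (by omega), heσ, ← pow_succ, hσn, he1] at h2
      apply Nat.eq_of_mul_eq_mul_left (Nat.succ_pos m)
      rw [h2]; omega
    show a ^ cc e (m + 1) (σ ^ m) σ = a
    rw [hcc, pow_one]
  rw [Finset.prod_eq_one hz, one_mul, hlast]

end Std2

section Exp

variable {G : Type*} [Group G] {σ : G} {n : ℕ}

lemma exists_exp (hn : 0 < n) (hord : orderOf σ = n)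
    (hgen : ∀ g : G, g ∈ Subgroup.zpowers σ) (g : G) :
    ∃ j : ℕ, j < n ∧ σ ^ j = g := by
  obtain ⟨m, hm⟩ := Subgroup.mem_zpowers_iff.mp (hgen g)
  have hn' : (0 : ℤ) < (n : ℤ) := by exact_mod_cast hn
  have h0 : 0 ≤ m % (n : ℤ) := Int.emod_nonneg m (by omega)
  have hlt : m % (n : ℤ) < (n : ℤ) := Int.emod_lt_of_pos m hn'
  refine ⟨(m % (n : ℤ)).toNat, by omega, ?_⟩
  have hz : σ ^ (m % (n : ℤ)) = σ ^ m := by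
    rw [← hord]; exact zpow_mod_orderOf σ m
  rw [← hm, ← hz, ← zpow_natCast, Int.toNat_of_nonneg h0]

end Exp

end H2Aux

namespace H2Aux

section Main

variable {G F : Type*} [Group G] [Field F] (η : G →* RingAut F) (σ : G) (n : ℕ)

lemma norm_eq_uu (x : Fˣ) : cyclicNormHom η σ n x = uu η σ x n := rfl

variable (hn : 0 < n) (hord : orderOf σ = n) (hgen : ∀ g : G, g ∈ Subgroup.zpowers σ)

include hord hgen in
lemma bb_mem_fixedUnits {f : G → G → Fˣ} (hf : IsTwoCocycle η f) :
    bb σ f n ∈ fixedUnits η := by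
  have hf' := (isTwoCocycle_iff η f).mp hf
  have hσn : σ ^ n = 1 := by rw [← hord]; exact pow_orderOf_eq_one σ
  have h1 : act η σ (bb σ f n) = bb σ f n := by
    have h2 := act_bb_n hf' hσn 1
    rwa [pow_one] at h2
  intro g
  exact fixed_all hgen h1 g

/-- The invariant of a 2-cocycle, as a fixed unit. -/
def Phi0 (hord : orderOf σ = n) (hgen : ∀ g : G, g ∈ Subgroup.zpowers σ) :
    twoCocycles η →* fixedUnits η where
  toFun f := ⟨bb σ (f : G → G → Fˣ) n, bb_mem_fixedUnits η σ n hord hgen f.2⟩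
  map_one' := Subtype.ext (by
    show bb σ ((1 : twoCocycles η) : G → G → Fˣ) n = 1
    simp [bb])
  map_mul' f g := Subtype.ext (bb_mul σ (f : G → G → Fˣ) (g : G → G → Fˣ) n)

/-- The invariant homomorphism from 2-cocycles to fixed units modulo norms. -/
def Phi (hord : orderOf σ = n) (hgen : ∀ g : G, g ∈ Subgroup.zpowers σ) :
    twoCocycles η →*
      (fixedUnits η ⧸ ((cyclicNormHom η σ n).range.subgroupOf (fixedUnits η))) :=
  (QuotientGroup.mk' _).comp (Phi0 η σ n hord hgen)

include hn hord hgen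

lemma Phi_ker : (Phi η σ n hord hgen).ker =
    (twoCoboundaries η).subgroupOf (twoCocycles η) := by
  have hσn : σ ^ n = 1 := by rw [← hord]; exact pow_orderOf_eq_one σ
  ext f
  rw [MonoidHom.mem_ker, Subgroup.mem_subgroupOf]
  constructor
  · intro hf1
    have hmem := (QuotientGroup.eq_one_iff (Phi0 η σ n hord hgen f)).mp hf1
    rw [Subgroup.mem_subgroupOf] at hmem
    obtain ⟨u, hu⟩ := hmem
    have hu' : bb σ (f : G → G → Fˣ) n = uu η σ u n := by
      rw [← norm_eq_uu, hu]; rfl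
    have hf' := (isTwoCocycle_iff η (f : G → G → Fˣ)).mp f.2
    choose e he using fun g => exists_exp hn hord hgen g
    obtain ⟨r, hr⟩ := isTwoCoboundary_of_bb_eq hσn hu' hord hf' e (fun g => (he g).2)
    exact (isTwoCoboundary_iff η (f : G → G → Fˣ)).mpr ⟨r, hr⟩
  · intro hb
    obtain ⟨r, hr⟩ := (isTwoCoboundary_iff η (f : G → G → Fˣ)).mp hb
    apply (QuotientGroup.eq_one_iff (Phi0 η σ n hord hgen f)).mpr
    rw [Subgroup.mem_subgroupOf]
    exact ⟨r σ, (coboundary_bb_n hσn r hr).symm⟩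

lemma Phi_surjective : Function.Surjective (Phi η σ n hord hgen) := by
  intro x
  induction x using QuotientGroup.induction_on with
  | H y =>
    rcases Nat.lt_or_ge n 2 with h2 | h2
    · -- n = 1 : the quotient is trivial
      have hn1 : n = 1 := by omega
      subst hn1
      have hN : ∀ x : Fˣ, cyclicNormHom η σ 1 x = x := by
        intro x
        rw [norm_eq_uu]
        simp [uu]
      refine ⟨1, ?_⟩
      have hmk : (QuotientGroup.mk (Phi0 η σ 1 hord hgen 1) :
          fixedUnits η ⧸ ((cyclicNormHom η σ 1).range.subgroupOf (fixedUnits η))) =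
          QuotientGroup.mk y := by
        rw [QuotientGroup.eq, Subgroup.mem_subgroupOf]
        exact ⟨(((Phi0 η σ 1 hord hgen 1)⁻¹ * y : fixedUnits η) : Fˣ), hN _⟩
      exact hmk
    · -- n ≥ 2 : use the standard cocycle
      choose e he using fun g => exists_exp hn hord hgen g
      have helt : ∀ g, e g < n := fun g => (he g).1
      have he' : ∀ g, σ ^ e g = g := fun g => (he g).2
      set a : Fˣ := (y : Fˣ) with ha
      have hafix : ∀ g : G, act η g a = a := by
        intro g
        ext
        show η g ((y : Fˣ) : F) = ((y : Fˣ) : F)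
        exact y.2 g
      have hcoc := stdC_cocycle hn hord e he' helt (η := η) hafix
      have hmem : stdC a e n ∈ twoCocycles η :=
        (isTwoCocycle_iff η (stdC a e n)).mpr hcoc
      refine ⟨⟨stdC a e n, hmem⟩, ?_⟩
      have hP0 : Phi0 η σ n hord hgen ⟨stdC a e n, hmem⟩ = y := Subtype.ext (by
        show bb σ (stdC a e n) n = (y : Fˣ)
        rw [bb_stdC hn hord e he' helt h2 a])
      show QuotientGroup.mk (Phi0 η σ n hord hgen ⟨stdC a e n, hmem⟩) = QuotientGroup.mk y
      rw [hP0]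

theorem h2_equiv : Nonempty ((H2 η) ≃*
    (fixedUnits η ⧸ ((cyclicNormHom η σ n).range.subgroupOf (fixedUnits η)))) :=
  ⟨(QuotientGroup.quotientMulEquivOfEq (Phi_ker η σ n hn hord hgen)).symm.trans
    (QuotientGroup.quotientKerEquivOfSurjective _ (Phi_surjective η σ n hn hord hgen))⟩

end Main

end H2Aux

namespace H2Aux

lemma geom_block (Q t m : ℕ) (hm : Q ^ t - 1 = m) (hQ : 1 ≤ Q ^ t) :
    ∀ w : ℕ, (∑ i ∈ Finset.range (t * w), Q ^ i) ≡
      w * (∑ i ∈ Finset.range t, Q ^ i) [MOD m] := by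
  have hQt : Q ^ t ≡ 1 [MOD m] :=
    ((Nat.modEq_iff_dvd' hQ).mpr (hm ▸ dvd_refl m)).symm
  intro w
  induction w with
  | zero => simp [Nat.ModEq.refl]
  | succ w ih =>
      have hidx : t * (w + 1) = t * w + t := by ring
      rw [hidx, Finset.sum_range_add]
      have h2 : (∑ i ∈ Finset.range t, Q ^ (t * w + i)) =
          (Q ^ t) ^ w * ∑ i ∈ Finset.range t, Q ^ i := by
        rw [Finset.mul_sum]
        refine Finset.sum_congr rfl fun i _ => ?_
        rw [← pow_mul, ← pow_add]
      rw [h2]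
      have h3 : (Q ^ t) ^ w * (∑ i ∈ Finset.range t, Q ^ i) ≡
          1 * (∑ i ∈ Finset.range t, Q ^ i) [MOD m] :=
        Nat.ModEq.mul_right _ ((hQt.pow w).trans (by rw [one_pow]))
      calc (∑ i ∈ Finset.range (t * w), Q ^ i) + (Q ^ t) ^ w * ∑ i ∈ Finset.range t, Q ^ i
          ≡ w * (∑ i ∈ Finset.range t, Q ^ i) + 1 * ∑ i ∈ Finset.range t, Q ^ i [MOD m] :=
            Nat.ModEq.add ih h3
        _ = (w + 1) * ∑ i ∈ Finset.range t, Q ^ i := by ring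

lemma geom_mul (Q t : ℕ) (hQ : 1 ≤ Q) :
    (Q - 1) * (∑ i ∈ Finset.range t, Q ^ i) = Q ^ t - 1 := by
  have h1 : ((Q : ℤ) - 1) * (∑ i ∈ Finset.range t, (Q : ℤ) ^ i) = (Q : ℤ) ^ t - 1 := by
    rw [mul_comm]; exact geom_sum_mul (Q : ℤ) t
  have hQt : 1 ≤ Q ^ t := Nat.one_le_pow _ _ hQ
  zify [hQ, hQt]
  push_cast at h1
  linarith [h1]

lemma numth (Q t w : ℕ) (hQ : 2 ≤ Q) (ht : 0 < t) (hw : 0 < w) :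
    (Q - 1) / ((Q ^ t - 1) / Nat.gcd (Q ^ t - 1) (∑ i ∈ Finset.range (t * w), Q ^ i)) =
      Nat.gcd (Q - 1) w := by
  set e0 := Q - 1 with he0
  set S0 := ∑ i ∈ Finset.range t, Q ^ i with hS0
  set m := Q ^ t - 1 with hm
  set s := ∑ i ∈ Finset.range (t * w), Q ^ i with hs
  have hQt : 1 ≤ Q ^ t := Nat.one_le_pow _ _ (by omega)
  have hmul : e0 * S0 = m := geom_mul Q t (by omega)
  have hS0pos : 0 < S0 := by
    rw [hS0]
    refine Finset.sum_pos (fun i _ => pow_pos (by omega) i) ?_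
    exact Finset.nonempty_range_iff.mpr ht.ne'
  have he0pos : 0 < e0 := by omega
  have hmod : s ≡ w * S0 [MOD m] := geom_block Q t m rfl hQt w
  have hgcd : Nat.gcd m s = Nat.gcd e0 w * S0 := by
    have h1 : Nat.gcd m s = Nat.gcd m (w * S0) := by
      rw [Nat.gcd_rec m s, Nat.gcd_rec m (w * S0), hmod]
    rw [h1, ← hmul, Nat.gcd_mul_right]
  rw [hgcd, ← hmul, Nat.mul_div_mul_right _ _ hS0pos, Nat.div_div_self (Nat.gcd_dvd_left e0 w) he0pos.ne']

end H2Aux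


namespace H2Aux

section Count

variable {M : Type*} [CommGroup M] [Finite M] {ζ : M} (hζ : ∀ x : M, x ∈ Subgroup.zpowers ζ)

include hζ in
lemma subgroup_eq_zpowers (H : Subgroup M) (d : ℕ) (hd : 0 < d)
    (hdm : d ∣ orderOf ζ) (hH : ∀ x, x ∈ H ↔ x ^ d = 1) :
    H = Subgroup.zpowers (ζ ^ (orderOf ζ / d)) := by
  apply le_antisymm
  · intro x hx
    rw [hH] at hx
    obtain ⟨j, rfl⟩ := Subgroup.mem_zpowers_iff.mp (hζ x)
    have h1 : ζ ^ (j * (d : ℤ)) = 1 := by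
      rw [zpow_mul, zpow_natCast]; exact hx
    have h2 : ((orderOf ζ : ℕ) : ℤ) ∣ j * d := orderOf_dvd_iff_zpow_eq_one.mpr h1
    obtain ⟨c, hc⟩ := h2
    have hmd : (d : ℤ) * ((orderOf ζ / d : ℕ) : ℤ) = ((orderOf ζ : ℕ) : ℤ) := by
      exact_mod_cast congrArg (Nat.cast : ℕ → ℤ) (Nat.mul_div_cancel' hdm)
    have hd0 : (d : ℤ) ≠ 0 := by exact_mod_cast hd.ne'
    have hj : j = ((orderOf ζ / d : ℕ) : ℤ) * c := by
      apply mul_right_cancel₀ hd0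
      rw [hc, ← hmd]; ring
    rw [Subgroup.mem_zpowers_iff]
    exact ⟨c, by rw [hj, ← zpow_natCast ζ (orderOf ζ / d), ← zpow_mul, mul_comm ((orderOf ζ / d : ℕ) : ℤ) c]⟩
  · rw [Subgroup.zpowers_le, hH, ← pow_mul, Nat.div_mul_cancel hdm, pow_orderOf_eq_one]

lemma card_zpowers_pow_div (d : ℕ) (hdm : d ∣ orderOf ζ) :
    Nat.card (Subgroup.zpowers (ζ ^ (orderOf ζ / d))) = d := by
  rw [Nat.card_zpowers, orderOf_pow, Nat.gcd_eq_right (Nat.div_dvd_of_dvd hdm),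
    Nat.div_div_self hdm (orderOf_pos ζ).ne']

include hζ in
lemma range_eq_zpowers (s : ℕ) (φ : M →* M) (hφ : ∀ x, φ x = x ^ s) :
    φ.range = Subgroup.zpowers (ζ ^ s) := by
  apply le_antisymm
  · rintro _ ⟨x, rfl⟩
    rw [hφ]
    obtain ⟨j, rfl⟩ := Subgroup.mem_zpowers_iff.mp (hζ x)
    rw [Subgroup.mem_zpowers_iff]
    refine ⟨j, ?_⟩
    rw [← zpow_natCast ζ s, ← zpow_mul, mul_comm, zpow_mul, zpow_natCast]
  · rw [Subgroup.zpowers_le]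
    exact ⟨ζ, hφ ζ⟩

lemma card_zpowers_pow (s : ℕ) :
    Nat.card (Subgroup.zpowers (ζ ^ s)) = orderOf ζ / Nat.gcd (orderOf ζ) s := by
  rw [Nat.card_zpowers, orderOf_pow]

end Count

end H2Aux


namespace H2Aux

section Norm

variable {G F : Type*} [Group G] [Field F] (η : G →* RingAut F) (σ : G) (n : ℕ)

lemma norm_mem_fixedUnits (hord : orderOf σ = n)
    (hgen : ∀ g : G, g ∈ Subgroup.zpowers σ) (x : Fˣ) :
    cyclicNormHom η σ n x ∈ fixedUnits η := by
  have hσn : σ ^ n = 1 := by rw [← hord]; exact pow_orderOf_eq_one σ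
  have h1 : act η σ (uu η σ x n) = uu η σ x n := by
    rw [uu, map_prod]
    have h2 : ∀ i : ℕ, act η σ (act η (σ ^ i) x) = act η (σ ^ (i + 1)) x := by
      intro i
      rw [pow_succ']
      exact (act_mul η σ (σ ^ i) x).symm
    calc ∏ i ∈ Finset.range n, act η σ (act η (σ ^ i) x)
        = ∏ i ∈ Finset.range n, act η (σ ^ (i + 1)) x :=
          Finset.prod_congr rfl fun i _ => h2 i
      _ = ∏ i ∈ Finset.range n, act η (σ ^ i) x :=
          prod_shift hσn (fun g => act η g x)
      _ = uu η σ x n := rfl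
  intro g
  exact fixed_all hgen (by rw [norm_eq_uu]; exact h1) g

end Norm

end H2Aux

/-- let the cyclic group `C_n = ⟨σ⟩` act on the field `F = F_{q^r}` with
`q^r` elements via `η(σ) = φ^k` (`φ` the Frobenius, `k ∣ r`, `(r/k) ∣ n`). Then the
second cohomology group `H²_η(C_n, F^*)` is cyclic of order `gcd(q^k - 1, nk/r)`. -/
theorem H2_cyclic_of_gcd_order {G F : Type*} [Group G] [Field F] [Fintype F]
    (q r k n : ℕ) (hq : q.Prime) (hr : 0 < r) (hk : 0 < k) (hn : 0 < n)
    (hkr : k ∣ r) (hrkn : r / k ∣ n)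
    (hF : Fintype.card F = q ^ r)
    (σ : G) (hgen : ∀ g : G, g ∈ Subgroup.zpowers σ) (hord : orderOf σ = n)
    (η : G →* RingAut F) (hη : ∀ x : F, η σ x = x ^ q ^ k) :
    IsCyclic (H2 η) ∧ Nat.card (H2 η) = Nat.gcd (q ^ k - 1) (n * k / r) := by
  classical
  have hq2 : 2 ≤ q := hq.two_le
  have hQ2 : 2 ≤ q ^ k := le_trans hq2 (Nat.le_self_pow hk.ne' q)
  obtain ⟨t, hkt⟩ := hkr
  have ht : 0 < t := by
    rcases Nat.eq_zero_or_pos t with h | h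
    · subst h; rw [Nat.mul_zero] at hkt; omega
    · exact h
  have htrk : r / k = t := by rw [hkt]; exact Nat.mul_div_cancel_left t hk
  rw [htrk] at hrkn
  obtain ⟨w, htw⟩ := hrkn
  have hw : 0 < w := by
    rcases Nat.eq_zero_or_pos w with h | h
    · subst h; rw [Nat.mul_zero] at htw; omega
    · exact h
  have hnkr : n * k / r = w := by
    rw [hkt, htw, show t * w * k = w * (k * t) by ring]
    exact Nat.mul_div_cancel w (by positivity)
  have hqr : q ^ r = (q ^ k) ^ t := by rw [hkt, pow_mul]
  set Q := q ^ k with hQdef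
  set e0 := Q - 1 with he0def
  set m := q ^ r - 1 with hmdef
  set s := ∑ i ∈ Finset.range n, Q ^ i with hsdef
  have hmQt : m = Q ^ t - 1 := by rw [hmdef, hqr]
  have he0m : e0 ∣ m :=
    ⟨∑ i ∈ Finset.range t, Q ^ i, by rw [hmQt, ← H2Aux.geom_mul Q t (by omega)]⟩
  have hqr2 : 2 ≤ q ^ r := le_trans hq2 (Nat.le_self_pow hr.ne' q)
  have hm0 : 0 < m := by omega
  have he00 : 0 < e0 := by omega
  obtain ⟨ζ, hζ⟩ := IsCyclic.exists_generator (α := Fˣ)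
  have hmζ : orderOf ζ = m := by
    rw [orderOf_eq_card_of_forall_mem_zpowers hζ, Nat.card_eq_fintype_card,
      Fintype.card_units, hF]
  have hpow : ∀ (i : ℕ) (x : F), η (σ ^ i) x = x ^ Q ^ i := by
    intro i
    induction i with
    | zero =>
        intro x
        rw [pow_zero, map_one, pow_zero, pow_one]
        rfl
    | succ i ih =>
        intro x
        have hsp : η (σ ^ (i + 1)) x = η (σ ^ i) (η σ x) := by
          rw [pow_succ, map_mul]; rfl
        rw [hsp, hη x, map_pow, ih, ← pow_mul, ← pow_succ]
  have hNpow : ∀ x : Fˣ, cyclicNormHom η σ n x = x ^ s := by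
    intro x
    rw [Units.ext_iff, Units.val_pow_eq_pow_val]
    calc ((cyclicNormHom η σ n x : Fˣ) : F)
        = ∏ i ∈ Finset.range n, ((Units.map (η (σ ^ i)).toMonoidHom x : Fˣ) : F) :=
          map_prod (Units.coeHom F) _ _
      _ = ∏ i ∈ Finset.range n, ((x : F) ^ Q ^ i) :=
          Finset.prod_congr rfl fun i _ => hpow i (x : F)
      _ = (x : F) ^ s := Finset.prod_pow_eq_pow_sum _ _ _
  have hfix_iff : ∀ x : Fˣ, x ∈ fixedUnits η ↔ x ^ e0 = 1 := by
    intro x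
    have hQe : e0 + 1 = Q := by omega
    constructor
    · intro hx
      have h1 : (x : F) ^ Q = x := by rw [← hη (x : F)]; exact hx σ
      have h2 : x ^ Q = x := Units.ext (by rw [Units.val_pow_eq_pow_val]; exact h1)
      rw [← hQe, pow_succ] at h2
      have h4 : x ^ e0 * x = 1 * x := by rw [one_mul]; exact h2
      exact mul_right_cancel h4
    · intro hx g
      have hxQ : x ^ Q = x := by
        rw [← hQe, pow_succ, hx, one_mul]
      refine H2Aux.fixed_all hgen (Units.ext ?_) g
      show η σ (x : F) = (x : F)
      rw [hη, ← Units.val_pow_eq_pow_val, hxQ]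
  have hTzp : fixedUnits η = Subgroup.zpowers (ζ ^ (orderOf ζ / e0)) :=
    H2Aux.subgroup_eq_zpowers hζ (fixedUnits η) e0 he00 (by rw [hmζ]; exact he0m) hfix_iff
  have hcardT : Nat.card (fixedUnits η) = e0 := by
    rw [hTzp, H2Aux.card_zpowers_pow_div e0 (by rw [hmζ]; exact he0m)]
  have hRzp : (cyclicNormHom η σ n).range = Subgroup.zpowers (ζ ^ s) :=
    H2Aux.range_eq_zpowers hζ s _ hNpow
  have hcardR : Nat.card ((cyclicNormHom η σ n).range) = m / Nat.gcd m s := by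
    rw [hRzp, H2Aux.card_zpowers_pow, hmζ]
  have hle : (cyclicNormHom η σ n).range ≤ fixedUnits η := by
    rintro _ ⟨x, rfl⟩
    exact H2Aux.norm_mem_fixedUnits η σ n hord hgen x
  have hcardS' : Nat.card
      ((cyclicNormHom η σ n).range.subgroupOf (fixedUnits η)) = m / Nat.gcd m s := by
    rw [← hcardR]
    exact Nat.card_congr (Subgroup.subgroupOfEquivOfLe hle).toEquiv
  have hdivpos : 0 < m / Nat.gcd m s := by
    apply Nat.div_pos (Nat.le_of_dvd hm0 (Nat.gcd_dvd_left m s))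
    exact Nat.gcd_pos_of_pos_left s hm0
  have hcardQuot : Nat.card
      ((fixedUnits η) ⧸ ((cyclicNormHom η σ n).range.subgroupOf (fixedUnits η))) =
      e0 / (m / Nat.gcd m s) := by
    have h5 := Subgroup.card_eq_card_quotient_mul_card_subgroup
      (α := fixedUnits η) ((cyclicNormHom η σ n).range.subgroupOf (fixedUnits η))
    rw [hcardT, hcardS'] at h5
    exact (Nat.div_eq_of_eq_mul_left hdivpos h5).symm
  obtain ⟨eqv⟩ := H2Aux.h2_equiv η σ n hn hord hgen
  constructor
  · haveI : IsCyclic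
        ((fixedUnits η) ⧸ ((cyclicNormHom η σ n).range.subgroupOf (fixedUnits η))) :=
      isCyclic_of_surjective _ (QuotientGroup.mk'_surjective _)
    exact isCyclic_of_surjective eqv.symm eqv.symm.surjective
  · rw [Nat.card_congr eqv.toEquiv, hcardQuot, hnkr]
    have hseq : s = ∑ i ∈ Finset.range (t * w), Q ^ i := by rw [hsdef, htw]
    rw [hmQt, hseq]
    exact H2Aux.numth Q t w hQ2 ht hw
end

section
/- Let q be a prime, let F_{q^r} be the field with q^r elements with Frobenius automorphism φ : x ↦ x^q, let k divide r and r/k divide n, and let the cyclic group C_n = ⟨σ⟩ act on F_{q^r} via η(σ) = φ^k. For j coprime to n, let ψ_j be the automorphism of C_n sending σ^i to σ^{ij}. Then ψ_j satisfies η ∘ ψ_j = η if and only if j ≡ 1 (mod r/k). Consequently, the subgroup Aut_η(C_n) = {ψ ∈ Aut(C_n) : η ∘ ψ = η} of Aut(C_n) has order φ(n)/φ(r/k), where φ denotes Euler's totient function. -/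
lemma aux_pow_sub_one_dvd_iff {q r s : ℕ} (hq : 1 < q) (hr : 0 < r) :
    q ^ r - 1 ∣ q ^ s - 1 ↔ r ∣ s := by
  constructor
  · intro h
    have h1 : q ^ s = q ^ (r * (s / r)) * q ^ (s % r) := by
      rw [← pow_add, Nat.div_add_mod]
    obtain ⟨A', hA⟩ : ∃ A', q ^ (r * (s / r)) = A' + 1 :=
      ⟨q ^ (r * (s / r)) - 1, by have := Nat.one_le_pow (r * (s / r)) q (by omega); omega⟩
    obtain ⟨B', hB⟩ : ∃ B', q ^ (s % r) = B' + 1 :=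
      ⟨q ^ (s % r) - 1, by have := Nat.one_le_pow (s % r) q (by omega); omega⟩
    have e1 : (A' + 1) * (B' + 1) = (B' + 1) * A' + B' + 1 := by ring
    have h2 : q ^ r - 1 ∣ A' := by
      have := Nat.pow_sub_one_dvd_pow_sub_one q (dvd_mul_right r (s / r))
      rwa [hA, Nat.add_sub_cancel] at this
    have h3 : q ^ r - 1 ∣ (B' + 1) * A' + B' := by
      have : q ^ s - 1 = (B' + 1) * A' + B' := by rw [h1, hA, hB, e1]; omega
      rwa [this] at h
    have h4 : q ^ r - 1 ∣ B' := by
      have := Nat.dvd_sub h3 (h2.mul_left (B' + 1))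
      rwa [Nat.add_sub_cancel_left] at this
    have h5 : B' = 0 := by
      rcases Nat.eq_zero_or_pos B' with h | h
      · exact h
      · exfalso
        have hlt : q ^ (s % r) < q ^ r := Nat.pow_lt_pow_right hq (Nat.mod_lt s hr)
        have := Nat.le_of_dvd h h4
        omega
    have h6 : q ^ (s % r) = 1 := by omega
    have : s % r = 0 := by
      by_contra hs
      have := Nat.one_lt_pow hs hq
      omega
    exact Nat.dvd_of_mod_eq_zero this
  · rintro ⟨t, rfl⟩
    exact Nat.pow_sub_one_dvd_pow_sub_one q (dvd_mul_right r t)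

/-- Power-map automorphism of a group in which all elements commute and `g ^ n = 1`. -/
def myPowAut {G : Type*} [Group G] (n a b : ℕ)
    (hcomm : ∀ x y : G, Commute x y) (hpow : ∀ g : G, g ^ n = 1)
    (hab : a * b ≡ 1 [MOD n]) : MulAut G where
  toFun g := g ^ a
  invFun g := g ^ b
  left_inv g := by
    show (g ^ a) ^ b = g
    rw [← pow_mul]
    have h1 : g ^ (a * b) = g ^ 1 := pow_eq_pow_iff_modEq.mpr
      (hab.of_dvd (orderOf_dvd_of_pow_eq_one (hpow g)))
    simpa using h1
  right_inv g := by
    show (g ^ b) ^ a = g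
    rw [← pow_mul, mul_comm b a]
    have h1 : g ^ (a * b) = g ^ 1 := pow_eq_pow_iff_modEq.mpr
      (hab.of_dvd (orderOf_dvd_of_pow_eq_one (hpow g)))
    simpa using h1
  map_mul' x y := (hcomm x y).mul_pow a



/-- The subgroup `Aut_η(G)` of `η`-compatible automorphisms of `G`. -/
def compatAut {G F : Type*} [Group G] [Field F] (η : G →* RingAut F) :
    Subgroup (MulAut G) where
  carrier := {ψ | ∀ g : G, η (ψ g) = η g}
  one_mem' := fun _ => rfl
  mul_mem' := by
    intro a b ha hb g
    exact (ha (b g)).trans (hb g)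
  inv_mem' := by
    intro a ha g
    have h := ha (a⁻¹ g)
    rw [show a (a⁻¹ g) = g from a.apply_symm_apply g] at h
    exact h.symm

/-- let the cyclic group `C_n = ⟨σ⟩` act on `F = F_{q^r}` via
`η(σ) = φ^k`. For `j` coprime to `n`, the automorphism `ψ_j : σ^i ↦ σ^{ij}` satisfies
`η ∘ ψ_j = η` iff `j ≡ 1 (mod r/k)`; consequently the subgroup
`Aut_η(C_n) ≤ Aut(C_n)` has order `φ(n)/φ(r/k)`. -/
theorem compatAut_iff_and_card {G F : Type*} [Group G] [Field F] [Fintype F]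
    (q r k n : ℕ) (hq : q.Prime) (hr : 0 < r) (hk : 0 < k) (hn : 0 < n)
    (hkr : k ∣ r) (hrkn : r / k ∣ n)
    (hF : Fintype.card F = q ^ r)
    (σ : G) (hgen : ∀ g : G, g ∈ Subgroup.zpowers σ) (hord : orderOf σ = n)
    (η : G →* RingAut F) (hη : ∀ x : F, η σ x = x ^ q ^ k) :
    (∀ j : ℕ, Nat.gcd j n = 1 → ∀ ψ : MulAut G, ψ σ = σ ^ j →
      (ψ ∈ compatAut η ↔ j ≡ 1 [MOD r / k])) ∧
    Nat.card (compatAut η) = Nat.totient n / Nat.totient (r / k) := by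
  have hq1 : 1 < q := hq.one_lt
  set d := r / k with hd
  have hdpos : 0 < d := Nat.div_pos (Nat.le_of_dvd hr hkr) hk
  have hkd : k * d = r := Nat.mul_div_cancel' hkr
  haveI : NeZero n := ⟨hn.ne'⟩
  haveI : NeZero d := ⟨hdpos.ne'⟩
  -- action of powers of η σ
  have hpow : ∀ (m : ℕ) (x : F), ((η σ) ^ m : RingAut F) x = x ^ q ^ (k * m) := by
    intro m
    induction m with
    | zero => intro x; simp only [pow_zero, mul_zero, pow_one]; rfl
    | succ m ih =>
      intro x
      rw [pow_succ, show ((η σ) ^ m * η σ : RingAut F) x = ((η σ) ^ m) (η σ x) from rfl,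
        ih, hη, ← pow_mul, ← pow_add]
      ring_nf
  -- key order computation
  have key : ∀ m : ℕ, (η σ) ^ m = 1 ↔ d ∣ m := by
    intro m
    have hNpos : 0 < q ^ (k * m) := Nat.pow_pos (by omega)
    have step1 : (η σ) ^ m = 1 ↔ ∀ x : F, x ^ q ^ (k * m) = x := by
      constructor
      · intro h x
        rw [← hpow m x, h]; rfl
      · intro h
        apply DFunLike.ext
        intro x
        rw [hpow m x, h x]; rfl
    have step2 : (∀ x : F, x ^ q ^ (k * m) = x) ↔ (∀ u : Fˣ, u ^ (q ^ (k * m) - 1) = 1) := by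
      constructor
      · intro h u
        have h1 : (u : F) ^ q ^ (k * m) = u := h u
        have h2 : u ^ q ^ (k * m) = u := Units.ext (by push_cast; exact h1)
        have h3 : u ^ (q ^ (k * m) - 1) * u = 1 * u := by
          rw [one_mul, ← pow_succ, Nat.sub_add_cancel hNpos]
          exact h2
        exact mul_right_cancel h3
      · intro h x
        rcases eq_or_ne x 0 with rfl | hx
        · exact zero_pow hNpos.ne'
        · have h1 : (Units.mk0 x hx) ^ (q ^ (k * m) - 1) = 1 := h _
          have h2 : x ^ (q ^ (k * m) - 1) = 1 := by
            have := congrArg (Units.val) h1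
            push_cast at this
            simpa using this
          calc x ^ q ^ (k * m) = x ^ (q ^ (k * m) - 1 + 1) := by
                rw [Nat.sub_add_cancel hNpos]
            _ = x ^ (q ^ (k * m) - 1) * x := pow_succ x _
            _ = x := by rw [h2, one_mul]
    have step3 : (∀ u : Fˣ, u ^ (q ^ (k * m) - 1) = 1) ↔ q ^ r - 1 ∣ q ^ (k * m) - 1 := by
      rw [FiniteField.forall_pow_eq_one_iff, hF]
    have step4 : q ^ r - 1 ∣ q ^ (k * m) - 1 ↔ r ∣ k * m := aux_pow_sub_one_dvd_iff hq1 hr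
    have step5 : r ∣ k * m ↔ d ∣ m := by
      rw [← hkd]
      exact mul_dvd_mul_iff_left hk.ne'
    rw [step1, step2, step3, step4, step5]
  have horder : orderOf (η σ) = d :=
    Nat.dvd_antisymm (orderOf_dvd_of_pow_eq_one ((key d).mpr dvd_rfl))
      ((key _).mp (pow_orderOf_eq_one _))
  -- Part 1
  have part1 : ∀ j : ℕ, Nat.gcd j n = 1 → ∀ ψ : MulAut G, ψ σ = σ ^ j →
      (ψ ∈ compatAut η ↔ j ≡ 1 [MOD d]) := by
    intro j hj ψ hψ
    constructor
    · intro hmem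
      have h1 : η (ψ σ) = η σ := hmem σ
      rw [hψ, map_pow] at h1
      have h2 : (η σ) ^ j = (η σ) ^ 1 := by simpa using h1
      have := pow_eq_pow_iff_modEq.mp h2
      rwa [horder] at this
    · intro hmod g
      obtain ⟨i, rfl⟩ := Subgroup.mem_zpowers_iff.mp (hgen g)
      rw [map_zpow, hψ, ← zpow_natCast, ← zpow_mul, map_zpow, map_zpow]
      apply zpow_eq_zpow_iff_modEq.mpr
      rw [horder]
      calc (j : ℤ) * i ≡ 1 * i [ZMOD (d : ℕ)] :=
            Int.ModEq.mul_right i (Int.natCast_modEq_iff.mpr hmod)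
        _ = i := one_mul i
  refine ⟨part1, ?_⟩
  -- Part 2
  have hcomm : ∀ x y : G, Commute x y := by
    intro x y
    obtain ⟨i, rfl⟩ := Subgroup.mem_zpowers_iff.mp (hgen x)
    obtain ⟨l, rfl⟩ := Subgroup.mem_zpowers_iff.mp (hgen y)
    exact Commute.zpow_zpow_self σ i l
  have hpn : ∀ g : G, g ^ n = 1 := by
    intro g
    obtain ⟨i, rfl⟩ := Subgroup.mem_zpowers_iff.mp (hgen g)
    rw [← zpow_natCast, ← zpow_mul, mul_comm, zpow_mul, zpow_natCast, ← hord,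
      pow_orderOf_eq_one, one_zpow]
  haveI hfinG : Finite G := by
    have h0 : IsOfFinOrder σ := orderOf_pos_iff.mp (by rw [hord]; exact hn)
    have hsub : (Set.univ : Set G) ⊆ (Submonoid.powers σ : Set G) := fun g _ =>
      (h0.mem_powers_iff_mem_zpowers).mpr (hgen g)
    exact Set.finite_univ_iff.mp (Set.Finite.subset h0.finite_powers hsub)
  have hmod_unit : ∀ u : (ZMod n)ˣ, (u : ZMod n).val * ((u⁻¹ : (ZMod n)ˣ) : ZMod n).val
      ≡ 1 [MOD n] := by
    intro u
    have h : (((u : ZMod n).val * ((u⁻¹ : (ZMod n)ˣ) : ZMod n).val : ℕ) : ZMod n)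
        = ((1 : ℕ) : ZMod n) := by
      push_cast
      simp [ZMod.natCast_val, ZMod.cast_id]
    exact (ZMod.natCast_eq_natCast_iff _ _ _).mp h
  -- the bijection (ZMod n)ˣ → MulAut G
  set Φ : (ZMod n)ˣ → MulAut G := fun u =>
    myPowAut n (u : ZMod n).val ((u⁻¹ : (ZMod n)ˣ) : ZMod n).val hcomm hpn (hmod_unit u)
    with hΦ
  have hΦσ : ∀ u, Φ u σ = σ ^ (u : ZMod n).val := fun u => rfl
  have hΦinj : Function.Injective Φ := by
    intro u v huv
    have h1 : σ ^ (u : ZMod n).val = σ ^ (v : ZMod n).val := by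
      rw [← hΦσ u, ← hΦσ v, huv]
    have h2 := pow_eq_pow_iff_modEq.mp h1
    rw [hord] at h2
    have h3 : (u : ZMod n).val = (v : ZMod n).val := by
      have hu := ZMod.val_lt (u : ZMod n)
      have hv := ZMod.val_lt (v : ZMod n)
      unfold Nat.ModEq at h2
      rwa [Nat.mod_eq_of_lt hu, Nat.mod_eq_of_lt hv] at h2
    exact Units.ext (ZMod.val_injective n h3)
  have hΦsurj : Function.Surjective Φ := by
    intro ψ
    obtain ⟨m, hm⟩ := Subgroup.mem_zpowers_iff.mp (hgen (ψ σ))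
    set j : ZMod n := (m : ZMod n) with hj
    have hσj : σ ^ j.val = ψ σ := by
      rw [← hm, ← zpow_natCast]
      apply zpow_eq_zpow_iff_modEq.mpr
      rw [hord]
      have hcast : ((j.val : ℤ) : ZMod n) = ((m : ℤ) : ZMod n) := by
        push_cast
        simp [ZMod.natCast_val, ZMod.cast_id, hj]
      exact (ZMod.intCast_eq_intCast_iff _ _ _).mp hcast
    have hordψσ : orderOf (ψ σ) = n := by
      rw [← hord]
      exact orderOf_injective ψ.toMonoidHom ψ.injective σ
    have hcop : Nat.Coprime j.val n := by
      have h1 : orderOf (σ ^ j.val) = n := by rw [hσj, hordψσ]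
      rw [orderOf_pow, hord] at h1
      have hg : n.gcd j.val ∣ n := Nat.gcd_dvd_left _ _
      have h2 : n / n.gcd j.val * n.gcd j.val = n := Nat.div_mul_cancel hg
      rw [h1] at h2
      have h3 : n.gcd j.val = 1 := by
        have := Nat.eq_of_mul_eq_mul_left hn (h2.trans (mul_one n).symm)
        exact this
      exact Nat.coprime_comm.mp h3
    refine ⟨ZMod.unitOfCoprime j.val hcop, ?_⟩
    apply (MulEquiv.eq_iff_eq_on_generator hgen _ _).mpr
    rw [hΦσ]
    have hval : ((ZMod.unitOfCoprime j.val hcop : (ZMod n)ˣ) : ZMod n) = j := by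
      simp [ZMod.coe_unitOfCoprime, ZMod.natCast_val, ZMod.cast_id]
    rw [hval]
    exact hσj
  set e : (ZMod n)ˣ ≃ MulAut G := Equiv.ofBijective Φ ⟨hΦinj, hΦsurj⟩ with he
  have hker_iff : ∀ u : (ZMod n)ˣ, u ∈ (ZMod.unitsMap hrkn).ker ↔ e u ∈ compatAut η := by
    intro u
    have hcop : Nat.gcd (u : ZMod n).val n = 1 := ZMod.val_coe_unit_coprime u
    have heΦ : e u = Φ u := rfl
    rw [heΦ, part1 _ hcop (Φ u) (hΦσ u)]
    have h1 : u ∈ (ZMod.unitsMap hrkn).ker ↔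
        (ZMod.castHom hrkn (ZMod d)) (u : ZMod n) = 1 := by
      rw [MonoidHom.mem_ker, Units.ext_iff]
      rfl
    have h2 : (ZMod.castHom hrkn (ZMod d)) (u : ZMod n)
        = (((u : ZMod n).val : ℕ) : ZMod d) := by
      conv_lhs => rw [show ((u : ZMod n)) = (((u : ZMod n).val : ℕ) : ZMod n) by
        simp [ZMod.natCast_val, ZMod.cast_id]]
      rw [map_natCast]
    rw [h1, h2, show (1 : ZMod d) = ((1 : ℕ) : ZMod d) by simp,
      ZMod.natCast_eq_natCast_iff]
  have hcard1 : Nat.card (compatAut η) = Nat.card ((ZMod.unitsMap hrkn).ker) := by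
    apply Nat.card_congr
    exact (Equiv.subtypeEquiv e hker_iff).symm
  have hquot : ((ZMod n)ˣ ⧸ (ZMod.unitsMap hrkn).ker) ≃* (ZMod d)ˣ :=
    QuotientGroup.quotientKerEquivOfSurjective _ (ZMod.unitsMap_surjective hrkn)
  have h5 : Nat.totient n = Nat.totient d * Nat.card ((ZMod.unitsMap hrkn).ker) := by
    have := Subgroup.card_eq_card_quotient_mul_card_subgroup ((ZMod.unitsMap hrkn).ker)
    rw [Nat.card_congr hquot.toEquiv] at this
    rw [← ZMod.card_units_eq_totient n, ← ZMod.card_units_eq_totient d,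
      ← Nat.card_eq_fintype_card, ← Nat.card_eq_fintype_card]
    exact this
  rw [hcard1, h5, Nat.mul_div_cancel_left _ (Nat.totient_pos.mpr hdpos)]
end

section
/- Let q be a prime, let F_{q^r} be the field with q^r elements with Frobenius automorphism φ : x ↦ x^q, let k divide r and r/k divide n, let the cyclic group C_n = ⟨σ⟩ act on F_{q^r} via η(σ) = φ^k, and set m := gcd(q^k − 1, nk/r). Then the set of orbits of the pullback action of Aut_η(C_n) = {ψ ∈ Aut(C_n) : η ∘ ψ = η} on the cohomology group H²_η(C_n, F_{q^r}^*) is in bijection with the quotient of ℤ/mℤ by the equivalence relation a ∼_η b defined by: there exists an integer j with gcd(j, n) = 1 and j ≡ 1 (mod r/k) such that b ≡ j·a (mod m). -/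
/-- The orbit relation on `H²_η(G, F^*)` induced by the pullback action of the group
of `η`-compatible automorphisms of `G`: `c₂` is obtained from `c₁` by pulling back
along some `η`-compatible automorphism `ψ`. -/
def pullbackRel {G F : Type*} [Group G] [Field F] (η : G →* RingAut F)
    (c₁ c₂ : H2 η) : Prop :=
  ∃ ψ : MulAut G, (∀ g : G, η (ψ g) = η g) ∧
    ∃ (f : G → G → Fˣ) (hf : f ∈ twoCocycles η)
      (hf' : (fun g g' => f (ψ g) (ψ g')) ∈ twoCocycles η),
      c₁ = QuotientGroup.mk ⟨f, hf⟩ ∧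
      c₂ = QuotientGroup.mk ⟨fun g g' => f (ψ g) (ψ g'), hf'⟩

section CrossedProductAux

open Finset Subgroup

variable {G F : Type*} [Group G] [Field F] [Fintype F]

/-- All hypotheses of the main theorem, bundled. -/
structure CPSetup (q r k n : ℕ) (σ : G) (η : G →* RingAut F) : Prop where
  hq : q.Prime
  hr : 0 < r
  hk : 0 < k
  hn : 0 < n
  hkr : k ∣ r
  hrkn : r / k ∣ n
  hF : Fintype.card F = q ^ r
  hgen : ∀ g : G, g ∈ Subgroup.zpowers σ
  hord : orderOf σ = n
  hη : ∀ x : F, η σ x = x ^ q ^ k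

/-- canonical exponent of `g` with respect to the generator `σ`. -/
noncomputable def cpIdx (σ : G) (n : ℕ) (g : G) : ℕ :=
  sInf {i | i < n ∧ σ ^ i = g}

/-- the action of `g` on units -/
def uact (η : G →* RingAut F) (g : G) : Fˣ →* Fˣ := Units.map (η g).toMonoidHom

@[simp] theorem uact_coe (η : G →* RingAut F) (g : G) (x : Fˣ) :
    ((uact η g x : Fˣ) : F) = η g (x : F) := rfl

theorem uact_mul (η : G →* RingAut F) (g h : G) (x : Fˣ) :
    uact η (g * h) x = uact η g (uact η h x) := by
  ext
  simp only [uact, map_mul, Units.coe_map, MonoidHom.coe_coe]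
  rfl

theorem uact_one (η : G →* RingAut F) (x : Fˣ) : uact η 1 x = x := by
  ext
  simp only [uact, map_one, Units.coe_map, MonoidHom.coe_coe]
  rfl

theorem norm_def (η : G →* RingAut F) (σ : G) (n : ℕ) (x : Fˣ) :
    cyclicNormHom η σ n x = ∏ i ∈ Finset.range n, uact η (σ ^ i) x := rfl

theorem carry_key {n : ℕ} (hn : 0 < n) (x y z : ℕ) :
    (y + z) / n + (x + (y + z) % n) / n = (x + y + z) / n := by
  conv_rhs => rw [show x + y + z = x + (y + z) % n + n * ((y + z) / n) by
    have := Nat.mod_add_div (y + z) n; omega]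
  rw [Nat.add_mul_div_left _ _ hn, add_comm]

theorem carry_cocycle {n : ℕ} (hn : 0 < n) (a b c : ℕ) :
    (b + c) / n + (a + (b + c) % n) / n = (a + b) / n + ((a + b) % n + c) / n := by
  rw [carry_key hn a b c, add_comm ((a + b) % n) c, carry_key hn c a b]
  congr 1
  omega

theorem sum_carry {n : ℕ} (hn : 0 < n) (j : ℕ) :
    ∑ i ∈ Finset.range n, ((i * j) % n + j % n) / n = j % n := by
  have key : ∀ i, (i * j) % n + j % n
      = n * (((i * j) % n + j % n) / n) + ((i + 1) * j) % n := by
    intro i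
    have h1 : ((i * j) % n + j % n) % n = ((i + 1) * j) % n := by
      conv_rhs => rw [add_mul, one_mul, Nat.add_mod]
    have h2 := Nat.div_add_mod ((i * j) % n + j % n) n
    omega
  have hsum := Finset.sum_congr rfl (fun i (_ : i ∈ Finset.range n) => key i)
  have e1 : ∑ i ∈ Finset.range n, ((i * j) % n + j % n)
      = (∑ i ∈ Finset.range n, (i * j) % n) + n * (j % n) := by
    rw [Finset.sum_add_distrib, Finset.sum_const, card_range, smul_eq_mul, mul_comm]
  have e2 : ∑ i ∈ Finset.range n, (n * (((i * j) % n + j % n) / n) + ((i + 1) * j) % n)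
      = n * (∑ i ∈ Finset.range n, ((i * j) % n + j % n) / n)
        + ∑ i ∈ Finset.range n, ((i + 1) * j) % n := by
    rw [Finset.sum_add_distrib, Finset.mul_sum]
  have e3 : ∑ i ∈ Finset.range n, ((i + 1) * j) % n
      = ∑ i ∈ Finset.range n, (i * j) % n := by
    have h4 := Finset.sum_range_succ (fun i => (i * j) % n) n
    have h5 := Finset.sum_range_succ' (fun i => (i * j) % n) n
    simp only [Nat.mul_mod_left, Nat.mul_mod_right, zero_mul, Nat.zero_mod, add_zero] at h4 h5
    omega
  rw [e1, e2, e3] at hsum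
  have h6 : n * (j % n) = n * (∑ i ∈ Finset.range n, ((i * j) % n + j % n) / n) := by omega
  exact (Nat.eq_of_mul_eq_mul_left hn h6).symm

namespace CPSetup

variable {q r k n : ℕ} {σ : G} {η : G →* RingAut F}

theorem idx_exists (S : CPSetup q r k n σ η) (g : G) : ∃ i, i < n ∧ σ ^ i = g := by
  obtain ⟨z, hz⟩ := Subgroup.mem_zpowers_iff.mp (S.hgen g)
  have hn0 : (n : ℤ) ≠ 0 := by exact_mod_cast S.hn.ne'
  refine ⟨(z % (n : ℤ)).toNat, ?_, ?_⟩
  · have h1 : z % (n : ℤ) < n := Int.emod_lt_of_pos z (by exact_mod_cast S.hn)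
    omega
  · have h0 : (0 : ℤ) ≤ z % n := Int.emod_nonneg z hn0
    calc σ ^ (z % (n : ℤ)).toNat = σ ^ ((z % (n : ℤ)).toNat : ℤ) := (zpow_natCast _ _).symm
      _ = σ ^ (z % (n : ℤ)) := by rw [Int.toNat_of_nonneg h0]
      _ = σ ^ z := by rw [← S.hord]; exact zpow_mod_orderOf σ z
      _ = g := hz

theorem idx_mem (S : CPSetup q r k n σ η) (g : G) :
    cpIdx σ n g < n ∧ σ ^ cpIdx σ n g = g :=
  Nat.sInf_mem (S.idx_exists g)

theorem idx_lt (S : CPSetup q r k n σ η) (g : G) : cpIdx σ n g < n := (S.idx_mem g).1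

theorem pow_idx (S : CPSetup q r k n σ η) (g : G) : σ ^ cpIdx σ n g = g := (S.idx_mem g).2

theorem idx_unique (S : CPSetup q r k n σ η) {i : ℕ} {g : G} (h1 : i < n) (h2 : σ ^ i = g) :
    cpIdx σ n g = i := by
  have h3 : σ ^ cpIdx σ n g = σ ^ i := by rw [S.pow_idx g, h2]
  have h4 := pow_eq_pow_iff_modEq.mp h3
  rw [S.hord, Nat.ModEq, Nat.mod_eq_of_lt (S.idx_lt g), Nat.mod_eq_of_lt h1] at h4
  exact h4

theorem idx_pow (S : CPSetup q r k n σ η) (a : ℕ) : cpIdx σ n (σ ^ a) = a % n :=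
  S.idx_unique (Nat.mod_lt _ S.hn) (by rw [← S.hord]; exact pow_mod_orderOf σ a)

theorem idx_one (S : CPSetup q r k n σ η) : cpIdx σ n (1 : G) = 0 := by
  have := S.idx_pow 0; simpa using this

theorem idx_sigma (S : CPSetup q r k n σ η) : cpIdx σ n σ = 1 % n := by
  have := S.idx_pow 1; simpa using this

theorem g_pow_n (S : CPSetup q r k n σ η) (g : G) : g ^ n = 1 := by
  conv_lhs => rw [← S.pow_idx g]
  rw [← pow_mul, mul_comm, pow_mul, ← S.hord, pow_orderOf_eq_one, one_pow]

theorem pow_mod_n (S : CPSetup q r k n σ η) (g : G) (a : ℕ) : g ^ (a % n) = g ^ a :=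
  pow_eq_pow_iff_modEq.mpr
    ((Nat.mod_modEq a n).of_dvd (orderOf_dvd_of_pow_eq_one (S.g_pow_n g)))

theorem mul_comm' (S : CPSetup q r k n σ η) (a b : G) : a * b = b * a := by
  obtain ⟨za, hza⟩ := Subgroup.mem_zpowers_iff.mp (S.hgen a)
  obtain ⟨zb, hzb⟩ := Subgroup.mem_zpowers_iff.mp (S.hgen b)
  rw [← hza, ← hzb, ← zpow_add, ← zpow_add, add_comm]

end CPSetup

def cpPhi (σ : G) (n : ℕ) (f : G → G → Fˣ) : Fˣ := ∏ i ∈ Finset.range n, f (σ ^ i) σ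

theorem cpPhi_mul (σ : G) (n : ℕ) (f₁ f₂ : G → G → Fˣ) :
    cpPhi σ n (fun g h => f₁ g h * f₂ g h) = cpPhi σ n f₁ * cpPhi σ n f₂ := by
  simp [cpPhi, Finset.prod_mul_distrib]

theorem cpPhi_inv (σ : G) (n : ℕ) (f : G → G → Fˣ) :
    cpPhi σ n (fun g h => (f g h)⁻¹) = (cpPhi σ n f)⁻¹ := by
  simp [cpPhi]

/-- the standard 2-cocycle attached to a fixed unit -/
noncomputable def fstd (σ : G) (n : ℕ) (x : Fˣ) : G → G → Fˣ :=
  fun g h => x ^ ((cpIdx σ n g + cpIdx σ n h) / n)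

namespace CPSetup

variable {q r k n : ℕ} {σ : G} {η : G →* RingAut F}

theorem cocy (S : CPSetup q r k n σ η) {f : G → G → Fˣ} (hf : f ∈ twoCocycles η)
    (g h k' : G) : uact η g (f h k') * f g (h * k') = f g h * f (g * h) k' := by
  ext; simpa using hf g h k'

theorem prod_shift (S : CPSetup q r k n σ η) (T : G → Fˣ) :
    ∏ i ∈ Finset.range n, T (σ ^ (i + 1)) = ∏ i ∈ Finset.range n, T (σ ^ i) := by
  obtain ⟨m0, rfl⟩ : ∃ m0, n = m0 + 1 := ⟨n - 1, by have := S.hn; omega⟩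
  have h1 : σ ^ (m0 + 1) = 1 := by
    have h2 := pow_orderOf_eq_one σ
    rwa [S.hord] at h2
  calc ∏ i ∈ Finset.range (m0 + 1), T (σ ^ (i + 1))
      = (∏ i ∈ Finset.range m0, T (σ ^ (i + 1))) * T (σ ^ (m0 + 1)) :=
        Finset.prod_range_succ _ _
    _ = (∏ i ∈ Finset.range m0, T (σ ^ (i + 1))) * T (σ ^ 0) := by rw [h1, pow_zero]
    _ = ∏ i ∈ Finset.range (m0 + 1), T (σ ^ i) :=
        (Finset.prod_range_succ' (fun i => T (σ ^ i)) m0).symm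

theorem uact_of_fixed {x : Fˣ} (hx : x ∈ fixedUnits η) (g : G) : uact η g x = x := by
  ext; simpa using hx g

theorem mem_fixed_of_sigma (S : CPSetup q r k n σ η) {x : Fˣ} (hx : η σ (x : F) = (x : F)) :
    x ∈ fixedUnits η := by
  let T : Subgroup G :=
  { carrier := {g | η g (x : F) = (x : F)}
    one_mem' := by
      show η 1 (x : F) = (x : F)
      rw [map_one]
      rfl
    mul_mem' := by
      intro a b ha hb
      show η (a * b) (x : F) = (x : F)
      rw [map_mul]
      show η a (η b (x : F)) = (x : F)
      rw [hb, ha]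
    inv_mem' := by
      intro a ha
      show η a⁻¹ (x : F) = (x : F)
      conv_lhs => rw [← ha]
      show (η a⁻¹ * η a) (x : F) = (x : F)
      rw [← map_mul, inv_mul_cancel, map_one]
      rfl }
  have hσT : σ ∈ T := hx
  exact fun g => (Subgroup.zpowers_le.mpr hσT) (S.hgen g)

theorem phi_fixed (S : CPSetup q r k n σ η) {f : G → G → Fˣ} (hf : f ∈ twoCocycles η) :
    cpPhi σ n f ∈ fixedUnits η := by
  have key : uact η σ (cpPhi σ n f) = cpPhi σ n f := by
    have h1 : ∀ i ∈ Finset.range n,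
        uact η σ (f (σ ^ i) σ) * f σ (σ ^ (i + 1)) = f σ (σ ^ i) * f (σ ^ (i + 1)) σ := by
      intro i _
      have h2 := S.cocy hf σ (σ ^ i) σ
      rwa [← pow_succ, ← pow_succ'] at h2
    have h2 := Finset.prod_congr rfl h1
    rw [Finset.prod_mul_distrib, Finset.prod_mul_distrib, ← map_prod (uact η σ) _ _] at h2
    rw [S.prod_shift (fun g => f σ g), S.prod_shift (fun g => f g σ)] at h2
    exact mul_right_cancel (h2.trans (mul_comm _ _))
  apply S.mem_fixed_of_sigma
  have h3 := congrArg Units.val key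
  simpa using h3

theorem phi_cobound (S : CPSetup q r k n σ η) {f : G → G → Fˣ}
    (hb : f ∈ twoCoboundaries η) : ∃ c : Fˣ, cpPhi σ n f = cyclicNormHom η σ n c := by
  obtain ⟨t, ht⟩ := hb
  have ht' : ∀ g h' : G, f g h' = t g * uact η g (t h') * (t (g * h'))⁻¹ := by
    intro g h'; ext; simpa using ht g h'
  refine ⟨t σ, ?_⟩
  rw [show cpPhi σ n f = ∏ i ∈ Finset.range n, f (σ ^ i) σ from rfl]
  calc ∏ i ∈ Finset.range n, f (σ ^ i) σ
      = ∏ i ∈ Finset.range n, (t (σ ^ i) * uact η (σ ^ i) (t σ) * (t (σ ^ (i + 1)))⁻¹) :=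
        Finset.prod_congr rfl fun i _ => by rw [ht' (σ ^ i) σ, ← pow_succ]
    _ = (∏ i ∈ Finset.range n, t (σ ^ i)) * (∏ i ∈ Finset.range n, uact η (σ ^ i) (t σ))
          * (∏ i ∈ Finset.range n, (t (σ ^ (i + 1)))⁻¹) := by
        rw [Finset.prod_mul_distrib, Finset.prod_mul_distrib]
    _ = cyclicNormHom η σ n (t σ) := by
        rw [Finset.prod_inv_distrib, S.prod_shift t, norm_def]
        exact mul_inv_cancel_comm _ _

theorem fstd_mem (S : CPSetup q r k n σ η) {x : Fˣ} (hx : x ∈ fixedUnits η) :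
    fstd σ n x ∈ twoCocycles η := by
  intro g h k'
  have hgx : ∀ e : ℕ, η g ((x : F) ^ e) = (x : F) ^ e := fun e => by rw [map_pow, hx g]
  have h1 : cpIdx σ n (h * k') = (cpIdx σ n h + cpIdx σ n k') % n := by
    apply S.idx_unique (Nat.mod_lt _ S.hn)
    rw [S.pow_mod_n, pow_add, S.pow_idx, S.pow_idx]
  have h2 : cpIdx σ n (g * h) = (cpIdx σ n g + cpIdx σ n h) % n := by
    apply S.idx_unique (Nat.mod_lt _ S.hn)
    rw [S.pow_mod_n, pow_add, S.pow_idx, S.pow_idx]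
  show η g ((fstd σ n x h k' : Fˣ) : F) * _ = _
  simp only [fstd, Units.val_pow_eq_pow_val, h1, h2, hgx]
  rw [← pow_add, ← pow_add]
  congr 1
  exact carry_cocycle S.hn _ _ _

theorem phi_fstd (S : CPSetup q r k n σ η) (x : Fˣ) :
    cpPhi σ n (fstd σ n x) = x ^ (1 % n) := by
  have h1 : ∀ i ∈ Finset.range n, fstd σ n x (σ ^ i) σ = x ^ ((i * 1 % n + 1 % n) / n) := by
    intro i _
    rw [fstd, S.idx_pow, S.idx_sigma, mul_one]
  rw [cpPhi, Finset.prod_congr rfl h1, Finset.prod_pow_eq_pow_sum, sum_carry S.hn 1]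

theorem fn_pow {ψ : G → G} (hmul : ∀ a b, ψ (a * b) = ψ a * ψ b) (a : G) (i : ℕ) :
    ψ (a ^ i) = ψ a ^ i := by
  have h1 : ψ 1 = 1 := by
    have h2 := hmul 1 1
    rw [mul_one] at h2
    exact (left_eq_mul.mp h2)
  induction i with
  | zero => simpa using h1
  | succ i ih => rw [pow_succ, hmul, ih, pow_succ]

theorem phi_pull_fstd (S : CPSetup q r k n σ η) (ψ : G → G)
    (hmul : ∀ a b, ψ (a * b) = ψ a * ψ b) (x : Fˣ) :
    cpPhi σ n (fun g g' => fstd σ n x (ψ g) (ψ g')) = x ^ cpIdx σ n (ψ σ) := by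
  set j := cpIdx σ n (ψ σ) with hj
  have hψσ : ψ σ = σ ^ j := (S.pow_idx _).symm
  have h1 : ∀ i ∈ Finset.range n,
      fstd σ n x (ψ (σ ^ i)) (ψ σ) = x ^ ((i * j % n + j % n) / n) := by
    intro i _
    rw [fstd, fn_pow hmul, hψσ, ← pow_mul, S.idx_pow, S.idx_pow, mul_comm j i]
  rw [cpPhi, Finset.prod_congr rfl h1, Finset.prod_pow_eq_pow_sum, sum_carry S.hn j,
    Nat.mod_eq_of_lt (S.idx_lt _)]

theorem cobound_of_phi_norm (S : CPSetup q r k n σ η) {f : G → G → Fˣ}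
    (hf : f ∈ twoCocycles η) (c : Fˣ) (hc : cpPhi σ n f = cyclicNormHom η σ n c) :
    f ∈ twoCoboundaries η := by
  have f11 : ∀ h' : G, f 1 h' = f 1 1 := by
    intro h'
    have h0 := S.cocy hf 1 1 h'
    rw [uact_one, one_mul, one_mul] at h0
    exact mul_right_cancel h0
  have fg1 : ∀ g : G, f g 1 = uact η g (f 1 1) := by
    intro g
    have h0 := S.cocy hf g 1 1
    rw [mul_one, mul_one] at h0
    exact (mul_right_cancel h0).symm
  obtain ⟨t, ht0, htn, hstep⟩ : ∃ t : ℕ → Fˣ, t 0 = f 1 1 ∧ t n = f 1 1 ∧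
      ∀ a, t (a + 1) = t a * uact η (σ ^ a) c * (f (σ ^ a) σ)⁻¹ := by
    refine ⟨fun a => f 1 1 * (∏ i ∈ Finset.range a, uact η (σ ^ i) c)
      * (∏ i ∈ Finset.range a, f (σ ^ i) σ)⁻¹, by simp, ?_, ?_⟩
    · have hcc : (∏ i ∈ Finset.range n, uact η (σ ^ i) c)
          = ∏ i ∈ Finset.range n, f (σ ^ i) σ := by
        rw [← norm_def, ← hc]; rfl
      simp [hcc]
    · intro a
      simp only [Finset.prod_range_succ, mul_inv]
      simp [mul_comm, mul_left_comm, mul_assoc]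
  obtain ⟨rr, hrr⟩ : ∃ rr : G → Fˣ, ∀ g, rr g = t (cpIdx σ n g) :=
    ⟨fun g => t (cpIdx σ n g), fun _ => rfl⟩
  have t_wrap : ∀ a, a < n → t ((a + 1) % n) = t (a + 1) := by
    intro a ha
    rcases lt_or_eq_of_le (Nat.succ_le_of_lt ha) with h | h
    · rw [Nat.mod_eq_of_lt h]
    · have h' : a + 1 = n := by omega
      rw [h', Nat.mod_self, ht0, htn]
  have hstep' : ∀ g : G, f g σ = rr g * uact η g c * (rr (g * σ))⁻¹ := by
    intro g
    have hg : σ ^ cpIdx σ n g = g := S.pow_idx g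
    have h1 : cpIdx σ n (g * σ) = (cpIdx σ n g + 1) % n := by
      apply S.idx_unique (Nat.mod_lt _ S.hn)
      rw [S.pow_mod_n, pow_succ, hg]
    have h2 := hstep (cpIdx σ n g)
    rw [hg] at h2
    rw [hrr, hrr, h1, t_wrap _ (S.idx_lt g), h2]
    simp [mul_inv, inv_inv, mul_comm, mul_left_comm, mul_assoc]
  have main : ∀ b : ℕ, ∀ g : G,
      f g (σ ^ b) = rr g * uact η g (rr (σ ^ b)) * (rr (g * σ ^ b))⁻¹ := by
    intro b
    induction b with
    | zero =>
      intro g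
      simp only [pow_zero, mul_one]
      rw [fg1 g]
      have hr1 : rr 1 = f 1 1 := by rw [hrr, S.idx_one, ht0]
      rw [hr1, mul_inv_cancel_comm]
    | succ b ih =>
      intro g
      have h0 := S.cocy hf g (σ ^ b) σ
      rw [hstep' (σ ^ b), hstep' (g * σ ^ b), ih g, uact_mul] at h0
      rw [mul_assoc g (σ ^ b) σ, ← pow_succ] at h0
      refine mul_left_cancel
        (a := uact η g (rr (σ ^ b) * uact η (σ ^ b) c * (rr (σ ^ (b + 1)))⁻¹)) ?_
      rw [h0]
      simp only [map_mul, map_inv, mul_inv, inv_inv]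
      simp [mul_comm, mul_left_comm, mul_assoc]
  refine ⟨rr, ?_⟩
  intro g h'
  have hm := main (cpIdx σ n h') g
  rw [S.pow_idx h'] at hm
  have := congrArg Units.val hm
  simpa using this

end CPSetup

theorem geom_sum_mul_nat {x : ℕ} (hx : 1 ≤ x) (t : ℕ) :
    (∑ i ∈ Finset.range t, x ^ i) * (x - 1) = x ^ t - 1 := by
  have hInt := geom_sum_mul (x : ℤ) t
  have hxt : 1 ≤ x ^ t := Nat.one_le_pow _ _ hx
  zify [hx, hxt]
  push_cast
  simpa using hInt

theorem zmod_sum_pow_decompose {R : Type*} [CommRing R] (x : R) (t u : ℕ) (hx : x ^ t = 1) :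
    ∑ i ∈ Finset.range (t * u), x ^ i = (u : R) * ∑ i ∈ Finset.range t, x ^ i := by
  induction u with
  | zero => simp
  | succ u ih =>
    rw [Nat.mul_succ, Finset.sum_range_add, ih]
    have h1 : ∀ i, x ^ (t * u + i) = x ^ i := by
      intro i
      rw [pow_add, pow_mul, hx, one_pow, one_mul]
    rw [Finset.sum_congr rfl fun i _ => h1 i]
    push_cast
    ring

namespace CPSetup

variable {q r k n : ℕ} {σ : G} {η : G →* RingAut F}

theorem hq2 (S : CPSetup q r k n σ η) : 2 ≤ q := S.hq.two_le

theorem qk2 (S : CPSetup q r k n σ η) : 2 ≤ q ^ k :=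
  Nat.one_lt_pow S.hk.ne' S.hq.one_lt

theorem qr2 (S : CPSetup q r k n σ η) : 2 ≤ q ^ r :=
  Nat.one_lt_pow S.hr.ne' S.hq.one_lt

theorem d_pos (S : CPSetup q r k n σ η) : 0 < q ^ k - 1 := by have := S.qk2; omega

theorem Q_pos (S : CPSetup q r k n σ η) : 0 < q ^ r - 1 := by have := S.qr2; omega

theorem d_dvd_Q (S : CPSetup q r k n σ η) : q ^ k - 1 ∣ q ^ r - 1 := by
  have h := Nat.sub_dvd_pow_sub_pow (q ^ k) 1 (r / k)
  rwa [one_pow, ← pow_mul, Nat.mul_div_cancel' S.hkr] at h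

theorem n_eq (S : CPSetup q r k n σ η) : n = (r / k) * (n * k / r) := by
  have hu : n * k / r = n / (r / k) := by
    conv_lhs => rw [← Nat.mul_div_cancel' S.hkr, mul_comm n k, Nat.mul_div_mul_left _ _ S.hk]
  rw [hu, Nat.mul_div_cancel' S.hrkn]

theorem u_dvd_n (S : CPSetup q r k n σ η) : n * k / r ∣ n :=
  ⟨r / k, by rw [mul_comm]; exact S.n_eq⟩

theorem geom_QD (S : CPSetup q r k n σ η) :
    (∑ i ∈ Finset.range (r / k), (q ^ k) ^ i) = (q ^ r - 1) / (q ^ k - 1) := by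
  refine (Nat.div_eq_of_eq_mul_left S.d_pos ?_).symm
  rw [geom_sum_mul_nat (by have := S.qk2; omega) (r / k), ← pow_mul,
    Nat.mul_div_cancel' S.hkr]

theorem s_cong (S : CPSetup q r k n σ η) :
    (∑ i ∈ Finset.range n, (q ^ k) ^ i)
      ≡ (n * k / r) * ((q ^ r - 1) / (q ^ k - 1)) [MOD q ^ r - 1] := by
  apply (ZMod.natCast_eq_natCast_iff _ _ _).mp
  have hqr1 : ((q ^ r : ℕ) : ZMod (q ^ r - 1)) = 1 := by
    rw [show q ^ r = (q ^ r - 1) + 1 by have := S.qr2; omega]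
    push_cast [ZMod.natCast_self]
    ring
  have hx : ((q : ZMod (q ^ r - 1)) ^ k) ^ (r / k) = 1 := by
    rw [← pow_mul, Nat.mul_div_cancel' S.hkr]
    exact_mod_cast hqr1
  push_cast
  calc ∑ i ∈ Finset.range n, ((q : ZMod (q ^ r - 1)) ^ k) ^ i
      = ∑ i ∈ Finset.range ((r / k) * (n * k / r)), ((q : ZMod (q ^ r - 1)) ^ k) ^ i := by
        rw [← S.n_eq]
    _ = ((n * k / r : ℕ) : ZMod (q ^ r - 1))
          * ∑ i ∈ Finset.range (r / k), ((q : ZMod (q ^ r - 1)) ^ k) ^ i := by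
        rw [zmod_sum_pow_decompose _ _ _ hx]
    _ = ((n * k / r : ℕ) : ZMod (q ^ r - 1)) * (((q ^ r - 1) / (q ^ k - 1) : ℕ) : ZMod (q ^ r - 1)) := by
        rw [← S.geom_QD]
        push_cast
        ring
  

theorem gcd_s_Q (S : CPSetup q r k n σ η) :
    Nat.gcd (∑ i ∈ Finset.range n, (q ^ k) ^ i) (q ^ r - 1)
      = ((q ^ r - 1) / (q ^ k - 1)) * Nat.gcd (q ^ k - 1) (n * k / r) := by
  have h1 : Nat.gcd (∑ i ∈ Finset.range n, (q ^ k) ^ i) (q ^ r - 1)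
      = Nat.gcd ((n * k / r) * ((q ^ r - 1) / (q ^ k - 1))) (q ^ r - 1) := by
    rw [Nat.gcd_comm _ (q ^ r - 1), Nat.gcd_comm _ (q ^ r - 1),
      Nat.gcd_rec (q ^ r - 1), Nat.gcd_rec (q ^ r - 1), S.s_cong]
  obtain ⟨D, hD⟩ : ∃ D, (q ^ r - 1) / (q ^ k - 1) = D := ⟨_, rfl⟩
  have hQ : q ^ r - 1 = D * (q ^ k - 1) := by rw [← hD, Nat.div_mul_cancel S.d_dvd_Q]
  rw [h1, hD, hQ, mul_comm (n * k / r) D, Nat.gcd_mul_left,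
    Nat.gcd_comm (n * k / r) (q ^ k - 1)]

theorem eta_pow (S : CPSetup q r k n σ η) (a : ℕ) (x : F) :
    η (σ ^ a) x = x ^ (q ^ k) ^ a := by
  induction a with
  | zero =>
    rw [pow_zero, pow_zero, pow_one, map_one]
    rfl
  | succ a ih =>
    rw [pow_succ, map_mul]
    show η (σ ^ a) (η σ x) = _
    rw [S.hη, map_pow, ih, ← pow_mul, ← pow_succ]

theorem pow_q_pow_r (S : CPSetup q r k n σ η) (w : ℕ) (x : F) : x ^ (q ^ r) ^ w = x := by
  induction w with
  | zero => rw [pow_zero, pow_one]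
  | succ w ih =>
    rw [pow_succ, pow_mul, ih]
    have h := FiniteField.pow_card x
    rwa [S.hF] at h

theorem eta_pow_id (S : CPSetup q r k n σ η) {a : ℕ} (ha : r ∣ k * a) (x : F) :
    η (σ ^ a) x = x := by
  obtain ⟨w, hw⟩ := ha
  rw [S.eta_pow, ← pow_mul, hw, pow_mul]
  exact S.pow_q_pow_r w x

theorem norm_pow (S : CPSetup q r k n σ η) (x : Fˣ) :
    cyclicNormHom η σ n x = x ^ (∑ i ∈ Finset.range n, (q ^ k) ^ i) := by
  have h1 : ∀ i ∈ Finset.range n, uact η (σ ^ i) x = x ^ (q ^ k) ^ i := by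
    intro i _
    ext
    rw [uact_coe, S.eta_pow, Units.val_pow_eq_pow_val]
  rw [norm_def, Finset.prod_congr rfl h1, Finset.prod_pow_eq_pow_sum]

theorem card_units' (S : CPSetup q r k n σ η) : Nat.card Fˣ = q ^ r - 1 := by
  classical
  rw [Nat.card_eq_fintype_card, Fintype.card_units, S.hF]

theorem exists_zeta (S : CPSetup q r k n σ η) :
    ∃ ζ : Fˣ, orderOf ζ = q ^ r - 1 ∧ ∀ x : Fˣ, x ∈ Subgroup.zpowers ζ := by
  classical
  obtain ⟨ζ, hζ⟩ := IsCyclic.exists_generator (α := Fˣ)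
  refine ⟨ζ, ?_, hζ⟩
  have h := orderOf_eq_card_of_forall_mem_zpowers hζ
  rw [h]
  exact S.card_units'

end CPSetup

namespace CPSetup

variable {q r k n : ℕ} {σ : G} {η : G →* RingAut F}

theorem mem_fixed_iff (S : CPSetup q r k n σ η) {x : Fˣ} :
    x ∈ fixedUnits η ↔ x ^ (q ^ k - 1) = 1 := by
  constructor
  · intro hx
    have h1 : η σ (x : F) = x := hx σ
    rw [S.hη] at h1
    have h2 : x ^ q ^ k = x := by ext; rw [Units.val_pow_eq_pow_val]; exact h1
    have h3 : x ^ (q ^ k - 1) * x = x ^ q ^ k := by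
      rw [← pow_succ]
      congr 1
      have := S.qk2; omega
    rw [h2] at h3
    exact mul_right_cancel (h3.trans (one_mul x).symm)
  · intro hx
    apply S.mem_fixed_of_sigma
    rw [S.hη]
    have h2 : x ^ q ^ k = x := by
      rw [show q ^ k = (q ^ k - 1) + 1 by have := S.qk2; omega, pow_succ, hx, one_mul]
    calc (x : F) ^ q ^ k = ((x ^ q ^ k : Fˣ) : F) := by rw [Units.val_pow_eq_pow_val]
      _ = x := by rw [h2]

theorem gen_orderOf (S : CPSetup q r k n σ η) {ζ : Fˣ} (hζo : orderOf ζ = q ^ r - 1) :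
    orderOf (ζ ^ ((q ^ r - 1) / (q ^ k - 1))) = q ^ k - 1 := by
  have hQd0 : (q ^ r - 1) / (q ^ k - 1) ≠ 0 :=
    (Nat.div_pos (Nat.le_of_dvd S.Q_pos S.d_dvd_Q) S.d_pos).ne'
  rw [orderOf_pow' _ hQd0, hζo, Nat.gcd_eq_right (Nat.div_dvd_of_dvd S.d_dvd_Q),
    Nat.div_div_self S.d_dvd_Q S.Q_pos.ne']

theorem gen_pow_d (S : CPSetup q r k n σ η) {ζ : Fˣ} (hζo : orderOf ζ = q ^ r - 1) :
    (ζ ^ ((q ^ r - 1) / (q ^ k - 1))) ^ (q ^ k - 1) = 1 := by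
  rw [← pow_mul, Nat.div_mul_cancel S.d_dvd_Q, ← hζo, pow_orderOf_eq_one]

theorem fixed_eq_zpowers (S : CPSetup q r k n σ η) {ζ : Fˣ}
    (hζo : orderOf ζ = q ^ r - 1) (hζg : ∀ x : Fˣ, x ∈ Subgroup.zpowers ζ) :
    fixedUnits η = Subgroup.zpowers (ζ ^ ((q ^ r - 1) / (q ^ k - 1))) := by
  have h3 : ((q ^ r - 1) / (q ^ k - 1)) * (q ^ k - 1) = q ^ r - 1 :=
    Nat.div_mul_cancel S.d_dvd_Q
  ext x
  rw [S.mem_fixed_iff]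
  constructor
  · intro hx
    obtain ⟨w, hw⟩ := Subgroup.mem_zpowers_iff.mp (hζg x)
    have h1 : ζ ^ (w * ((q ^ k - 1 : ℕ) : ℤ)) = 1 := by
      calc ζ ^ (w * ((q ^ k - 1 : ℕ) : ℤ)) = (ζ ^ w) ^ ((q ^ k - 1 : ℕ) : ℤ) := zpow_mul ζ w _
        _ = x ^ ((q ^ k - 1 : ℕ) : ℤ) := by rw [hw]
        _ = 1 := by rw [zpow_natCast, hx]
    have h2 : ((q ^ r - 1 : ℕ) : ℤ) ∣ w * ((q ^ k - 1 : ℕ) : ℤ) := by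
      rw [← hζo]
      exact orderOf_dvd_iff_zpow_eq_one.mpr h1
    have hd0 : ((q ^ k - 1 : ℕ) : ℤ) ≠ 0 := by
      have := S.d_pos; exact_mod_cast this.ne'
    rw [← h3] at h2
    rw [Nat.cast_mul] at h2
    have h4 := (mul_dvd_mul_iff_right hd0).mp h2
    obtain ⟨v, hv⟩ := h4
    rw [Subgroup.mem_zpowers_iff]
    refine ⟨v, ?_⟩
    rw [← zpow_natCast ζ ((q ^ r - 1) / (q ^ k - 1)), ← zpow_mul, ← hv, hw]
  · intro hx
    obtain ⟨v, hv⟩ := Subgroup.mem_zpowers_iff.mp hx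
    rw [← hv, ← zpow_natCast ((ζ ^ ((q ^ r - 1) / (q ^ k - 1))) ^ v), ← zpow_mul, mul_comm,
      zpow_mul, zpow_natCast, S.gen_pow_d hζo, one_zpow]

theorem norm_range_eq (S : CPSetup q r k n σ η) {ζ : Fˣ}
    (hζo : orderOf ζ = q ^ r - 1) (hζg : ∀ x : Fˣ, x ∈ Subgroup.zpowers ζ) :
    MonoidHom.range (cyclicNormHom η σ n)
      = Subgroup.zpowers ((ζ ^ ((q ^ r - 1) / (q ^ k - 1))) ^ Nat.gcd (q ^ k - 1) (n * k / r)) := by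
  have hgen_pow : (ζ ^ ((q ^ r - 1) / (q ^ k - 1))) ^ Nat.gcd (q ^ k - 1) (n * k / r)
      = ζ ^ Nat.gcd (∑ i ∈ Finset.range n, (q ^ k) ^ i) (q ^ r - 1) := by
    rw [← pow_mul, S.gcd_s_Q]
  ext y
  constructor
  · rintro ⟨x, rfl⟩
    rw [S.norm_pow, hgen_pow]
    obtain ⟨w, hw⟩ := Subgroup.mem_zpowers_iff.mp (hζg x)
    rw [← hw]
    rw [Subgroup.mem_zpowers_iff]
    obtain ⟨e, he⟩ := Nat.gcd_dvd_left (∑ i ∈ Finset.range n, (q ^ k) ^ i) (q ^ r - 1)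
    refine ⟨w * e, ?_⟩
    calc (ζ ^ Nat.gcd (∑ i ∈ Finset.range n, (q ^ k) ^ i) (q ^ r - 1)) ^ (w * e)
        = ζ ^ ((Nat.gcd (∑ i ∈ Finset.range n, (q ^ k) ^ i) (q ^ r - 1) : ℤ) * (w * e)) := by
          rw [← zpow_natCast ζ, ← zpow_mul]
      _ = ζ ^ (w * ((∑ i ∈ Finset.range n, (q ^ k) ^ i : ℕ) : ℤ)) := by
          congr 1
          rw [show ((∑ i ∈ Finset.range n, (q ^ k) ^ i : ℕ) : ℤ)
            = ((Nat.gcd (∑ i ∈ Finset.range n, (q ^ k) ^ i) (q ^ r - 1) * e : ℕ) : ℤ) by rw [← he]]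
          push_cast
          ring
      _ = (ζ ^ w) ^ ((∑ i ∈ Finset.range n, (q ^ k) ^ i : ℕ) : ℤ) := by rw [zpow_mul]
      _ = (ζ ^ w) ^ (∑ i ∈ Finset.range n, (q ^ k) ^ i) := by rw [zpow_natCast]
  · intro hy
    have hζs : cyclicNormHom η σ n ζ = ζ ^ (∑ i ∈ Finset.range n, (q ^ k) ^ i) := S.norm_pow ζ
    have hQ1 : ζ ^ ((q ^ r - 1 : ℕ) : ℤ) = 1 := by
      rw [zpow_natCast, ← hζo, pow_orderOf_eq_one]
    have hmem : ζ ^ Nat.gcd (∑ i ∈ Finset.range n, (q ^ k) ^ i) (q ^ r - 1)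
        ∈ MonoidHom.range (cyclicNormHom η σ n) := by
      have hB := Int.gcd_eq_gcd_ab ((∑ i ∈ Finset.range n, (q ^ k) ^ i : ℕ) : ℤ)
        ((q ^ r - 1 : ℕ) : ℤ)
      rw [Int.gcd_natCast_natCast] at hB
      have h1 : ζ ^ (Nat.gcd (∑ i ∈ Finset.range n, (q ^ k) ^ i) (q ^ r - 1) : ℤ)
          = (ζ ^ ((∑ i ∈ Finset.range n, (q ^ k) ^ i : ℕ) : ℤ))
              ^ Int.gcdA ((∑ i ∈ Finset.range n, (q ^ k) ^ i : ℕ) : ℤ) ((q ^ r - 1 : ℕ) : ℤ)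
            * (ζ ^ ((q ^ r - 1 : ℕ) : ℤ))
              ^ Int.gcdB ((∑ i ∈ Finset.range n, (q ^ k) ^ i : ℕ) : ℤ) ((q ^ r - 1 : ℕ) : ℤ) := by
        rw [← zpow_mul, ← zpow_mul, ← zpow_add, ← hB]
      rw [hQ1, one_zpow, mul_one] at h1
      rw [← zpow_natCast ζ, h1, zpow_natCast ζ, ← hζs]
      exact Subgroup.zpow_mem _ (MonoidHom.mem_range.mpr ⟨ζ, rfl⟩) _
    obtain ⟨v, hv⟩ := Subgroup.mem_zpowers_iff.mp hy
    rw [← hv, hgen_pow]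
    exact Subgroup.zpow_mem _ hmem v

end CPSetup

namespace CPSetup

variable {q r k n : ℕ} {σ : G} {η : G →* RingAut F}

theorem finite_G (S : CPSetup q r k n σ η) : Finite G := by
  have hsur : Function.Surjective (fun i : Fin n => σ ^ (i : ℕ)) := fun g =>
    ⟨⟨cpIdx σ n g, S.idx_lt g⟩, S.pow_idx g⟩
  exact Finite.of_surjective _ hsur

theorem mk_eq_mk (S : CPSetup q r k n σ η) {a b : ↥(twoCocycles η)}
    (h : (fun g h' => ((a : G → G → Fˣ) g h') * (((b : G → G → Fˣ)) g h')⁻¹)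
        ∈ twoCoboundaries η) :
    (QuotientGroup.mk a : H2 η) = QuotientGroup.mk b := by
  rw [QuotientGroup.eq]
  rw [Subgroup.mem_subgroupOf]
  have h2 := (twoCoboundaries η).inv_mem h
  have h3 : ((a⁻¹ * b : ↥(twoCocycles η)) : G → G → Fˣ)
      = (fun g h' => (a : G → G → Fˣ) g h' * ((b : G → G → Fˣ) g h')⁻¹)⁻¹ := by
    funext g h'
    simp [Pi.mul_apply, Pi.inv_apply, mul_inv_rev, inv_inv, mul_comm]
  rw [h3]
  exact h2

theorem ratio_cocycle (S : CPSetup q r k n σ η) (a b : ↥(twoCocycles η)) :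
    (fun g h' => ((a : G → G → Fˣ) g h') * (((b : G → G → Fˣ)) g h')⁻¹)
      ∈ twoCocycles η := by
  have h1 := mul_mem a.2 ((twoCocycles η).inv_mem b.2)
  have h3 : ((a : G → G → Fˣ) * (b : G → G → Fˣ)⁻¹)
      = fun g h' => ((a : G → G → Fˣ) g h') * (((b : G → G → Fˣ)) g h')⁻¹ := rfl
  rwa [h3] at h1

theorem mk_eq_of_phi (S : CPSetup q r k n σ η) (a b : ↥(twoCocycles η)) (c : Fˣ)
    (hc : cpPhi σ n ↑a = cpPhi σ n ↑b * cyclicNormHom η σ n c) :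
    (QuotientGroup.mk a : H2 η) = QuotientGroup.mk b := by
  apply S.mk_eq_mk
  apply S.cobound_of_phi_norm (S.ratio_cocycle a b) c
  rw [cpPhi_mul σ n (↑a) (fun g h' => (((b : G → G → Fˣ)) g h')⁻¹), cpPhi_inv, hc]
  exact mul_inv_cancel_comm _ _

theorem mk_eq_fstd (S : CPSetup q r k n σ η) (a : ↥(twoCocycles η)) :
    (QuotientGroup.mk a : H2 η)
      = QuotientGroup.mk ⟨fstd σ n (cpPhi σ n ↑a), S.fstd_mem (S.phi_fixed a.2)⟩ := by
  rcases Nat.lt_or_ge n 2 with h2 | h2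
  · have hn1 : n = 1 := by have := S.hn; omega
    refine S.mk_eq_of_phi _ _ (cpPhi σ n ↑a) ?_
    rw [S.phi_fstd, S.norm_pow]
    subst hn1
    norm_num
  · refine S.mk_eq_of_phi _ _ 1 ?_
    rw [S.phi_fstd, map_one, mul_one, Nat.mod_eq_of_lt (by omega), pow_one]

theorem fstd_cobound_iff (S : CPSetup q r k n σ η) {x : Fˣ} (hx : x ∈ fixedUnits η) :
    fstd σ n x ∈ twoCoboundaries η ↔ x ∈ MonoidHom.range (cyclicNormHom η σ n) := by
  constructor
  · intro h
    obtain ⟨c, hc⟩ := S.phi_cobound h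
    rw [S.phi_fstd] at hc
    rcases Nat.lt_or_ge n 2 with h2 | h2
    · have hn1 : n = 1 := by have := S.hn; omega
      refine ⟨x, ?_⟩
      rw [S.norm_pow]
      subst hn1
      norm_num
    · rw [Nat.mod_eq_of_lt (by omega), pow_one] at hc
      exact ⟨c, hc.symm⟩
  · rintro ⟨c, rfl⟩
    apply S.cobound_of_phi_norm (S.fstd_mem hx) (c ^ (1 % n))
    rw [S.phi_fstd, map_pow]

set_option synthInstance.maxHeartbeats 1000000 in
set_option maxHeartbeats 1600000 in
theorem main_equiv (S : CPSetup q r k n σ η) :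
    ∃ E : H2 η ≃ ZMod (Nat.gcd (q ^ k - 1) (n * k / r)),
      ∀ (c : H2 η) (j : ℕ), E (c ^ j) = (j : ZMod (Nat.gcd (q ^ k - 1) (n * k / r))) * E c := by
  classical
  obtain ⟨ζ, hζo, hζg⟩ := S.exists_zeta
  set m := Nat.gcd (q ^ k - 1) (n * k / r) with hm
  set gen := ζ ^ ((q ^ r - 1) / (q ^ k - 1)) with hgen
  have hm0 : 0 < m := Nat.gcd_pos_of_pos_left _ S.d_pos
  let Fs : ↥(fixedUnits η) →* ↥(twoCocycles η) :=
  { toFun := fun x => ⟨fstd σ n ↑x, S.fstd_mem x.2⟩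
    map_one' := by
      apply Subtype.ext
      funext g h'
      show (1 : Fˣ) ^ _ = _
      simp [fstd]
    map_mul' := by
      intro x y
      apply Subtype.ext
      funext g h'
      show (_ : Fˣ) ^ _ = _
      simp [fstd, mul_pow] }
  let ν : ↥(fixedUnits η) →* H2 η := (QuotientGroup.mk' _).comp Fs
  have hν_surj : Function.Surjective ν := by
    intro c
    obtain ⟨a, rfl⟩ := QuotientGroup.mk'_surjective _ c
    exact ⟨⟨cpPhi σ n ↑a, S.phi_fixed a.2⟩, (S.mk_eq_fstd a).symm⟩
  have hker : ∀ x : ↥(fixedUnits η), ν x = 1 ↔ (x : Fˣ) ∈ Subgroup.zpowers (gen ^ m) := by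
    intro x
    have h1 : ν x = QuotientGroup.mk (Fs x) := rfl
    rw [h1, QuotientGroup.eq_one_iff, Subgroup.mem_subgroupOf]
    have h2 : ((Fs x : ↥(twoCocycles η)) : G → G → Fˣ) = fstd σ n ↑x := rfl
    rw [h2, S.fstd_cobound_iff x.2, S.norm_range_eq hζo hζg, ← hgen, ← hm]
  have hsub : Subgroup.zpowers (gen ^ m) ≤ fixedUnits η := by
    rw [S.fixed_eq_zpowers hζo hζg, ← hgen]
    exact Subgroup.zpowers_le.mpr (Subgroup.pow_mem _ (Subgroup.mem_zpowers gen) m)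
  have eker : ↥(MonoidHom.ker ν) ≃ ↥(Subgroup.zpowers (gen ^ m)) :=
  { toFun := fun y => ⟨↑↑y, (hker _).mp y.2⟩
    invFun := fun y => ⟨⟨↑y, hsub y.2⟩, (hker _).mpr y.2⟩
    left_inv := fun y => by apply Subtype.ext; apply Subtype.ext; rfl
    right_inv := fun y => by apply Subtype.ext; rfl }
  have hcard_ker : Nat.card ↥(MonoidHom.ker ν) = (q ^ k - 1) / m := by
    rw [Nat.card_congr eker, Nat.card_zpowers, orderOf_pow' _ hm0.ne', S.gen_orderOf hζo,
      Nat.gcd_eq_right (hm ▸ Nat.gcd_dvd_left (q ^ k - 1) (n * k / r))]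
  have hcard_fixed : Nat.card ↥(fixedUnits η) = q ^ k - 1 := by
    rw [S.fixed_eq_zpowers hζo hζg, ← hgen, Nat.card_zpowers, S.gen_orderOf hζo]
  haveI : Finite G := S.finite_G
  have hcard_H2 : Nat.card (H2 η) = m := by
    have h1 := Subgroup.card_eq_card_quotient_mul_card_subgroup (MonoidHom.ker ν)
    have e2 : (↥(fixedUnits η) ⧸ MonoidHom.ker ν) ≃* H2 η :=
      QuotientGroup.quotientKerEquivOfSurjective ν hν_surj
    rw [hcard_fixed, hcard_ker, Nat.card_congr e2.toEquiv] at h1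
    have hmd : m ∣ q ^ k - 1 := hm ▸ Nat.gcd_dvd_left (q ^ k - 1) (n * k / r)
    have hdm0 : 0 < (q ^ k - 1) / m := Nat.div_pos (Nat.le_of_dvd S.d_pos hmd) hm0
    have h5 : m * ((q ^ k - 1) / m) = q ^ k - 1 := Nat.mul_div_cancel' hmd
    apply Nat.eq_of_mul_eq_mul_right hdm0
    omega
  haveI : IsCyclic (H2 η) := isCyclic_of_surjective ν hν_surj
  obtain ⟨γ, hγ⟩ := IsCyclic.exists_generator (α := H2 η)
  have hγord : orderOf γ = m := by
    have htop : Subgroup.zpowers γ = ⊤ := by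
      rw [Subgroup.eq_top_iff']
      exact hγ
    have h6 := Nat.card_zpowers γ
    rw [htop] at h6
    rw [← h6, ← hcard_H2]
    rw [Subgroup.card_top]
  haveI : NeZero m := ⟨hm0.ne'⟩
  have hf0 : (zmultiplesHom (Additive (H2 η)) (Additive.ofMul γ)) (m : ℤ) = 0 := by
    rw [zmultiplesHom_apply, ← ofMul_zpow, zpow_natCast, ← hγord, pow_orderOf_eq_one]
    rfl
  let φ : ZMod m →+ Additive (H2 η) :=
    ZMod.lift m ⟨zmultiplesHom (Additive (H2 η)) (Additive.ofMul γ), hf0⟩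
  have hφ_surj : Function.Surjective φ := by
    intro c
    obtain ⟨z, hz⟩ := Subgroup.mem_zpowers_iff.mp (hγ (Additive.toMul c))
    refine ⟨(z : ZMod m), ?_⟩
    rw [ZMod.lift_coe, zmultiplesHom_apply, ← ofMul_zpow, hz]
    rfl
  have hφ_inj : Function.Injective φ := by
    rw [ZMod.lift_injective]
    intro z hz
    rw [zmultiplesHom_apply, ← ofMul_zpow] at hz
    have h1 : γ ^ z = 1 := by
      have h7 := congrArg Additive.toMul hz
      rwa [toMul_ofMul, toMul_zero] at h7
    have h2 : ((orderOf γ : ℤ)) ∣ z := orderOf_dvd_iff_zpow_eq_one.mpr h1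
    rw [hγord] at h2
    exact (ZMod.intCast_zmod_eq_zero_iff_dvd z m).mpr h2
  let E' : ZMod m ≃+ Additive (H2 η) := AddEquiv.ofBijective φ ⟨hφ_inj, hφ_surj⟩
  refine ⟨Additive.ofMul.trans E'.symm.toEquiv, ?_⟩
  intro c j
  show E'.symm (Additive.ofMul (c ^ j)) = (j : ZMod m) * E'.symm (Additive.ofMul c)
  rw [ofMul_pow, map_nsmul, nsmul_eq_mul]

end CPSetup

theorem pull_cocycle {G F : Type*} [Group G] [Field F] {η : G →* RingAut F}
    {ψ : G → G} (hmul : ∀ a b, ψ (a * b) = ψ a * ψ b) (hψ : ∀ g : G, η (ψ g) = η g)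
    {f : G → G → Fˣ} (hf : f ∈ twoCocycles η) :
    (fun g g' => f (ψ g) (ψ g')) ∈ twoCocycles η := by
  intro g h k'
  have h0 := hf (ψ g) (ψ h) (ψ k')
  rw [← hmul h k', ← hmul g h, hψ g] at h0
  exact h0

theorem pull_cobound {G F : Type*} [Group G] [Field F] {η : G →* RingAut F}
    {ψ : G → G} (hmul : ∀ a b, ψ (a * b) = ψ a * ψ b) (hψ : ∀ g : G, η (ψ g) = η g)
    {f : G → G → Fˣ} (hb : f ∈ twoCoboundaries η) :
    (fun g g' => f (ψ g) (ψ g')) ∈ twoCoboundaries η := by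
  obtain ⟨t, ht⟩ := hb
  refine ⟨fun g => t (ψ g), fun g h' => ?_⟩
  have h0 := ht (ψ g) (ψ h')
  rw [← hmul g h', hψ g] at h0
  exact h0

namespace CPSetup

variable {q r k n : ℕ} {σ : G} {η : G →* RingAut F}

theorem pull_mk_pow (S : CPSetup q r k n σ η) {ψ : G → G}
    (hmul : ∀ a b, ψ (a * b) = ψ a * ψ b) (hψ : ∀ g : G, η (ψ g) = η g)
    (a : ↥(twoCocycles η))
    (hp : (fun g g' => (a : G → G → Fˣ) (ψ g) (ψ g')) ∈ twoCocycles η) :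
    (QuotientGroup.mk (⟨fun g g' => (a : G → G → Fˣ) (ψ g) (ψ g'), hp⟩ :
        ↥(twoCocycles η)) : H2 η)
      = (QuotientGroup.mk a : H2 η) ^ (cpIdx σ n (ψ σ)) := by
  have hxf : cpPhi σ n ↑a ∈ fixedUnits η := S.phi_fixed a.2
  set x := cpPhi σ n (a : G → G → Fˣ) with hx
  set j := cpIdx σ n (ψ σ) with hj
  set bstd : ↥(twoCocycles η) := ⟨fstd σ n x, S.fstd_mem hxf⟩ with hbstd
  have hpull_fstd_mem : (fun g g' => fstd σ n x (ψ g) (ψ g')) ∈ twoCocycles η :=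
    pull_cocycle hmul hψ (S.fstd_mem hxf)
  -- step 2 : classes of the two pullbacks agree
  have h1 : (fun g h' => ((a : G → G → Fˣ) g h') * ((fstd σ n x) g h')⁻¹)
      ∈ twoCoboundaries η := by
    have h0 := S.mk_eq_fstd a
    rw [QuotientGroup.eq, Subgroup.mem_subgroupOf] at h0
    have h0' := (twoCoboundaries η).inv_mem h0
    have h3 : (((a⁻¹ * bstd : ↥(twoCocycles η)) : G → G → Fˣ))⁻¹
        = fun g h' => ((a : G → G → Fˣ) g h') * ((fstd σ n x) g h')⁻¹ := by
      funext g h'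
      show ((((a : G → G → Fˣ) g h')⁻¹ * (fstd σ n x g h')))⁻¹ = _
      simp [mul_inv_rev, inv_inv, mul_comm]
    rw [← h3]
    exact h0'
  have h2 : (fun g g' => ((a : G → G → Fˣ) (ψ g) (ψ g'))
        * ((fstd σ n x) (ψ g) (ψ g'))⁻¹) ∈ twoCoboundaries η :=
    pull_cobound hmul hψ h1
  have step2 : (QuotientGroup.mk (⟨fun g g' => (a : G → G → Fˣ) (ψ g) (ψ g'), hp⟩ :
        ↥(twoCocycles η)) : H2 η)
      = QuotientGroup.mk (⟨fun g g' => fstd σ n x (ψ g) (ψ g'), hpull_fstd_mem⟩ :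
        ↥(twoCocycles η)) := S.mk_eq_mk h2
  -- step 3 : the pullback of the standard cocycle is its j-th power
  have hmkpow : ((QuotientGroup.mk bstd : H2 η)) ^ j = QuotientGroup.mk (bstd ^ j) := by
    have h4 := map_pow (QuotientGroup.mk' ((twoCoboundaries η).subgroupOf (twoCocycles η)))
      bstd j
    exact h4.symm
  have step3 : (QuotientGroup.mk (⟨fun g g' => fstd σ n x (ψ g) (ψ g'), hpull_fstd_mem⟩ :
        ↥(twoCocycles η)) : H2 η) = (QuotientGroup.mk bstd : H2 η) ^ j := by
    rw [hmkpow]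
    have hPhiPull := S.phi_pull_fstd ψ hmul x
    have hPhiPow : cpPhi σ n ↑(bstd ^ j) = (x ^ (1 % n)) ^ j := by
      have h5 : ((bstd ^ j : ↥(twoCocycles η)) : G → G → Fˣ) = (fstd σ n x) ^ j := rfl
      have h6 : ((fstd σ n x) ^ j : G → G → Fˣ)
          = fun g h' => (fstd σ n x g h') ^ j := rfl
      have h7 : cpPhi σ n (fun g h' => (fstd σ n x g h') ^ j)
          = (cpPhi σ n (fstd σ n x)) ^ j := by
        simp [cpPhi, Finset.prod_pow]
      rw [h5, h6, h7, S.phi_fstd]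
    rcases Nat.lt_or_ge n 2 with hn2 | hn2
    · have hj0 : j = 0 := by have := S.idx_lt (ψ σ); have := S.hn; omega
      refine S.mk_eq_of_phi _ _ 1 ?_
      rw [hPhiPull, hPhiPow, ← hj, hj0, map_one, mul_one]
      norm_num
    · refine S.mk_eq_of_phi _ _ 1 ?_
      rw [hPhiPull, hPhiPow, map_one, mul_one, Nat.mod_eq_of_lt (by omega), pow_one, ← hj]
  rw [step2, step3, ← S.mk_eq_fstd a]

theorem r_dvd_of_dvd (S : CPSetup q r k n σ η) {a : ℕ} (h : (q ^ r - 1) ∣ q ^ a - 1) :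
    r ∣ a := by
  have hq1 : 1 < q := S.hq.one_lt
  have h1 : q ^ a ≡ q ^ (a % r) [MOD q ^ r - 1] := by
    conv_lhs => rw [show a = r * (a / r) + a % r from (Nat.div_add_mod a r).symm]
    rw [pow_add, pow_mul]
    have h2 : (q ^ r) ^ (a / r) ≡ 1 ^ (a / r) [MOD q ^ r - 1] :=
      Nat.ModEq.pow _ ((Nat.modEq_iff_dvd' (by have := S.qr2; omega)).mpr dvd_rfl).symm
    calc (q ^ r) ^ (a / r) * q ^ (a % r)
        ≡ 1 ^ (a / r) * q ^ (a % r) [MOD q ^ r - 1] := h2.mul_right _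
      _ = q ^ (a % r) := by rw [one_pow, one_mul]
  have h3 : q ^ a ≡ 1 [MOD q ^ r - 1] :=
    ((Nat.modEq_iff_dvd' (Nat.one_le_pow _ _ (by omega))).mpr h).symm
  have h4 : q ^ (a % r) ≡ 1 [MOD q ^ r - 1] := h1.symm.trans h3
  have h5 : (q ^ r - 1) ∣ q ^ (a % r) - 1 :=
    (Nat.modEq_iff_dvd' (Nat.one_le_pow _ _ (by omega))).mp h4.symm
  have h7 : q ^ (a % r) < q ^ r := Nat.pow_lt_pow_right hq1 (Nat.mod_lt _ S.hr)
  have h8 : 1 ≤ q ^ (a % r) := Nat.one_le_pow _ _ (by omega)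
  have h9 : q ^ (a % r) - 1 = 0 := by
    rcases Nat.eq_zero_or_pos (q ^ (a % r) - 1) with h' | h'
    · exact h'
    · exact absurd (Nat.le_of_dvd h' h5) (by omega)
  have h11 : a % r = 0 := by
    by_contra h'
    have h12 : 1 < q ^ (a % r) := Nat.one_lt_pow h' hq1
    omega
  exact Nat.dvd_of_mod_eq_zero h11

theorem j_modeq (S : CPSetup q r k n σ η) {j : ℕ} (hj : η (σ ^ j) = η σ) :
    j ≡ 1 [MOD r / k] := by
  rcases eq_or_ne (r / k) 1 with h1 | h1
  · rw [h1]
    exact Nat.modEq_one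
  obtain ⟨ζ, hζo, hζg⟩ := S.exists_zeta
  have h2 : (ζ : F) ^ (q ^ k) ^ j = (ζ : F) ^ q ^ k := by
    rw [← S.eta_pow j, hj, S.hη]
  have h3 : ζ ^ (q ^ k) ^ j = ζ ^ q ^ k := by
    ext
    rw [Units.val_pow_eq_pow_val, Units.val_pow_eq_pow_val]
    exact h2
  have h4 := pow_eq_pow_iff_modEq.mp h3
  rw [hζo] at h4
  have hj1 : 1 ≤ j := by
    by_contra h'
    have hj0 : j = 0 := by omega
    rw [hj0, pow_zero] at h4
    have h5 : (q ^ r - 1) ∣ (q ^ k - 1) := (Nat.modEq_iff_dvd' (by have := S.qk2; omega)).mp h4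
    have hkr' : k < r := by
      have h6 : 1 ≤ r / k := Nat.div_pos (Nat.le_of_dvd S.hr S.hkr) S.hk
      have h6' : 2 ≤ r / k := by omega
      have h7 := Nat.mul_div_cancel' S.hkr
      have h8 : k * 2 ≤ k * (r / k) := Nat.mul_le_mul_left k h6'
      have := S.hk
      omega
    have h8 : q ^ k - 1 < q ^ r - 1 := by
      have h9 : q ^ k < q ^ r := Nat.pow_lt_pow_right S.hq.one_lt hkr'
      have := S.qk2
      have := S.qr2
      omega
    have h9 := Nat.le_of_dvd S.d_pos h5
    have := S.qk2
    have := S.qr2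
    omega
  have hco : Nat.Coprime (q ^ k) (q ^ r - 1) := by
    apply Nat.Coprime.pow_left
    have h5 : Nat.Coprime (q ^ r) (q ^ r - 1) := by
      apply Nat.coprime_of_mul_modEq_one 1
      rw [mul_one]
      exact ((Nat.modEq_iff_dvd' (by have := S.qr2; omega)).mpr dvd_rfl).symm
    exact Nat.Coprime.coprime_dvd_left (dvd_pow_self q S.hr.ne') h5
  have h10 : (q ^ k) * (q ^ k) ^ (j - 1) ≡ (q ^ k) * 1 [MOD q ^ r - 1] := by
    rw [mul_one, show (q ^ k) * (q ^ k) ^ (j - 1) = (q ^ k) ^ ((j - 1) + 1) by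
      rw [pow_succ]; ring, show (j - 1) + 1 = j by omega]
    exact h4
  have h11 := Nat.ModEq.cancel_left_of_coprime hco.symm h10
  have h12 : (q ^ r - 1) ∣ (q ^ k) ^ (j - 1) - 1 := by
    have h13 := (Nat.modEq_iff_dvd' (Nat.one_le_pow _ _ (by have := S.qk2; omega))).mp h11.symm
    exact h13
  rw [← pow_mul] at h12
  have h13 : r ∣ k * (j - 1) := S.r_dvd_of_dvd h12
  obtain ⟨w, hw⟩ := h13
  have hrk := Nat.mul_div_cancel' S.hkr
  have h14 : j - 1 = (r / k) * w := by
    have h15 : k * (j - 1) = k * ((r / k) * w) := by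
      rw [hw, ← mul_assoc, hrk]
    exact Nat.eq_of_mul_eq_mul_left S.hk h15
  exact ((Nat.modEq_iff_dvd' hj1).mpr ⟨w, h14⟩).symm

theorem eta_pow_eq_self (S : CPSetup q r k n σ η) {j : ℕ} (hj1 : 1 ≤ j)
    (hjmod : j ≡ 1 [MOD r / k]) (g : G) : η (g ^ j) = η g := by
  have hdvd : (r / k) ∣ (j - 1) := (Nat.modEq_iff_dvd' hj1).mp hjmod.symm
  have hr1 : r ∣ k * (j - 1) := by
    obtain ⟨w, hw⟩ := hdvd
    have hrk := Nat.mul_div_cancel' S.hkr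
    refine ⟨w, ?_⟩
    rw [hw, ← mul_assoc, hrk]
  obtain ⟨z, hz⟩ := Subgroup.mem_zpowers_iff.mp (S.hgen g)
  have h3 : η (σ ^ (j - 1)) = 1 := RingEquiv.ext fun x => S.eta_pow_id hr1 x
  have h1 : η (g ^ (j - 1)) = 1 := by
    have h2 : g ^ (j - 1) = (σ ^ (j - 1)) ^ z := by
      rw [← hz, ← zpow_natCast (σ ^ z), ← zpow_mul, mul_comm, zpow_mul, zpow_natCast]
    rw [h2, map_zpow, h3, one_zpow]
  have h4 : g ^ j = g ^ (j - 1) * g := by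
    rw [← pow_succ]
    congr 1
    omega
  rw [h4, map_mul, h1, one_mul]

theorem mul_aut_pow (S : CPSetup q r k n σ η) {j : ℕ} (hc : Nat.gcd j n = 1) :
    ∃ ψ : MulAut G, ∀ g : G, ψ g = g ^ j := by
  have hcop : Nat.Coprime j n := hc
  haveI : NeZero n := ⟨S.hn.ne'⟩
  obtain ⟨j', hj'⟩ : ∃ j', j * j' ≡ 1 [MOD n] := by
    refine ⟨(((ZMod.unitOfCoprime j hcop)⁻¹ : (ZMod n)ˣ) : ZMod n).val, ?_⟩
    apply (ZMod.natCast_eq_natCast_iff _ _ _).mp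
    push_cast
    rw [ZMod.natCast_val, ZMod.cast_id]
    rw [show (j : ZMod n) = ((ZMod.unitOfCoprime j hcop : (ZMod n)ˣ) : ZMod n) from
      (ZMod.coe_unitOfCoprime _ _).symm, ← Units.val_mul, mul_inv_cancel, Units.val_one]
  have key : ∀ g : G, g ^ (j * j') = g := by
    intro g
    calc g ^ (j * j') = g ^ (j * j' % n) := (S.pow_mod_n g _).symm
      _ = g ^ (1 % n) := by rw [show (j * j') % n = 1 % n from hj']
      _ = g ^ 1 := S.pow_mod_n g 1
      _ = g := pow_one g
  refine ⟨{ toFun := fun g => g ^ j, invFun := fun g => g ^ j',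
            left_inv := ?_, right_inv := ?_, map_mul' := ?_ }, fun g => rfl⟩
  · intro g
    show (g ^ j) ^ j' = g
    rw [← pow_mul]
    exact key g
  · intro g
    show (g ^ j') ^ j = g
    rw [← pow_mul, mul_comm j' j]
    exact key g
  · intro a b
    show (a * b) ^ j = a ^ j * b ^ j
    exact Commute.mul_pow (S.mul_comm' a b) j

theorem pull_mk_pow' (S : CPSetup q r k n σ η) {ψ : G → G}
    (hmul : ∀ a b, ψ (a * b) = ψ a * ψ b) (hψ : ∀ g : G, η (ψ g) = η g)
    {f : G → G → Fˣ} (hf : f ∈ twoCocycles η)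
    (hp : (fun g g' => f (ψ g) (ψ g')) ∈ twoCocycles η) :
    (QuotientGroup.mk (⟨fun g g' => f (ψ g) (ψ g'), hp⟩ : ↥(twoCocycles η)) : H2 η)
      = (QuotientGroup.mk (⟨f, hf⟩ : ↥(twoCocycles η)) : H2 η) ^ (cpIdx σ n (ψ σ)) :=
  S.pull_mk_pow hmul hψ ⟨f, hf⟩ hp

end CPSetup


end CrossedProductAux
/-- let the cyclic group `C_n = ⟨σ⟩` act on `F = F_{q^r}` via
`η(σ) = φ^k`, and set `m = gcd(q^k - 1, nk/r)`. Then the set of orbits of the pullback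
action of `Aut_η(C_n)` on `H²_η(C_n, F^*)` is in bijection with the quotient of
`ℤ/mℤ` by the relation `a ∼ b` iff `b = j·a` for some integer `j` coprime to `n` with
`j ≡ 1 (mod r/k)`. -/
theorem orbits_equiv_zmod_quot {G F : Type*} [Group G] [Field F] [Fintype F]
    (q r k n : ℕ) (hq : q.Prime) (hr : 0 < r) (hk : 0 < k) (hn : 0 < n)
    (hkr : k ∣ r) (hrkn : r / k ∣ n)
    (hF : Fintype.card F = q ^ r)
    (σ : G) (hgen : ∀ g : G, g ∈ Subgroup.zpowers σ) (hord : orderOf σ = n)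
    (η : G →* RingAut F) (hη : ∀ x : F, η σ x = x ^ q ^ k) :
    Nonempty (Quot (pullbackRel η) ≃
      Quot (fun a b : ZMod (Nat.gcd (q ^ k - 1) (n * k / r)) =>
        ∃ j : ℕ, Nat.gcd j n = 1 ∧ j ≡ 1 [MOD r / k] ∧ b = (j : ZMod _) * a)) := by
  have S : CPSetup q r k n σ η := ⟨hq, hr, hk, hn, hkr, hrkn, hF, hgen, hord, hη⟩
  obtain ⟨E, hE⟩ := S.main_equiv
  have hE1 : E 1 = 0 := by
    have h0 := hE 1 0
    rw [pow_zero] at h0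
    rw [h0]
    push_cast
    ring
  have hmn : ((n : ℕ) : ZMod (Nat.gcd (q ^ k - 1) (n * k / r))) = 0 := by
    rw [ZMod.natCast_eq_zero_iff]
    exact dvd_trans (Nat.gcd_dvd_right _ _) S.u_dvd_n
  have hcn : ∀ c : H2 η, c ^ n = 1 := by
    intro c
    apply E.injective
    rw [hE c n, hmn, zero_mul, hE1]
  have hpow_mod : ∀ (c : H2 η) (a : ℕ), c ^ (a % n) = c ^ a := by
    intro c a
    conv_rhs => rw [show a = n * (a / n) + a % n from (Nat.div_add_mod a n).symm]
    rw [pow_add, pow_mul, hcn, one_pow]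
    exact (one_mul (c ^ (a % n))).symm
  refine ⟨Quot.congr E ?_⟩
  intro c₁ c₂
  constructor
  · rintro ⟨ψ, hψ, f, hf, hf', hc₁, hc₂⟩
    refine ⟨cpIdx σ n (ψ σ), ?_, ?_, ?_⟩
    · have h1 : orderOf (ψ σ) = n := by
        rw [← hord]
        exact orderOf_injective ψ.toMonoidHom ψ.injective σ
      have h2 : σ ^ (cpIdx σ n (ψ σ)) = ψ σ := S.pow_idx _
      rcases Nat.eq_zero_or_pos (cpIdx σ n (ψ σ)) with h0 | h0
      · rw [h0, pow_zero] at h2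
        rw [← h2, orderOf_one] at h1
        rw [h0, Nat.gcd_zero_left, ← h1]
      · rw [← h2, orderOf_pow' σ h0.ne', hord] at h1
        have h3 : Nat.gcd n (cpIdx σ n (ψ σ)) ∣ n := Nat.gcd_dvd_left _ _
        have h4 := Nat.div_mul_cancel h3
        rw [h1] at h4
        have h5 : Nat.gcd n (cpIdx σ n (ψ σ)) = 1 :=
          Nat.eq_of_mul_eq_mul_left hn (by rw [h4, mul_one])
        rw [Nat.gcd_comm]
        exact h5
    · apply S.j_modeq
      rw [S.pow_idx]
      exact hψ σ
    · rw [hc₁, hc₂]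
      have hpull := S.pull_mk_pow' (ψ := fun g => ψ g) (fun a b => map_mul ψ a b) hψ hf hf'
      rw [hpull, hE]
  · rintro ⟨j, hgcd, hmod, hrel⟩
    rcases Nat.eq_zero_or_pos j with hj0 | hj0
    · have hn1 : n = 1 := by rw [hj0, Nat.gcd_zero_left] at hgcd; exact hgcd
      have hrk1 : r / k = 1 := Nat.dvd_one.mp (hn1 ▸ hrkn)
      have hrek : r = k := by
        have h6 := Nat.mul_div_cancel' hkr
        rw [hrk1, mul_one] at h6
        omega
      have hu1 : n * k / r = 1 := by rw [hn1, one_mul, hrek, Nat.div_self hk]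
      have hm1 : Nat.gcd (q ^ k - 1) (n * k / r) = 1 := by rw [hu1, Nat.gcd_one_right]
      have hsub : Subsingleton (ZMod (Nat.gcd (q ^ k - 1) (n * k / r))) := by
        rw [hm1]
        infer_instance
      have hcc : c₁ = c₂ := E.injective (@Subsingleton.elim _ hsub _ _)
      obtain ⟨a, ha⟩ := QuotientGroup.mk'_surjective
        ((twoCoboundaries η).subgroupOf (twoCocycles η)) c₁
      refine ⟨MulEquiv.refl G, fun g => rfl, ↑a, a.2, a.2, ?_, ?_⟩
      · exact ha.symm
      · rw [← hcc]
        exact ha.symm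
    · obtain ⟨ψ, hψdef⟩ := S.mul_aut_pow hgcd
      have hψη : ∀ g : G, η (ψ g) = η g := fun g => by
        rw [hψdef]
        exact S.eta_pow_eq_self hj0 hmod g
      obtain ⟨a, ha⟩ := QuotientGroup.mk'_surjective
        ((twoCoboundaries η).subgroupOf (twoCocycles η)) c₁
      have ha' : (QuotientGroup.mk (⟨↑a, a.2⟩ : ↥(twoCocycles η)) : H2 η) = c₁ := ha
      have hfp : (fun g g' => (a : G → G → Fˣ) (ψ g) (ψ g')) ∈ twoCocycles η :=
        pull_cocycle (fun x y => map_mul ψ x y) hψη a.2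
      refine ⟨ψ, hψη, ↑a, a.2, hfp, ha'.symm, ?_⟩
      have h1 := S.pull_mk_pow' (ψ := fun g => ψ g) (fun x y => map_mul ψ x y) hψη a.2 hfp
      have hidx : cpIdx σ n (ψ σ) = j % n := by
        rw [hψdef]
        exact S.idx_pow j
      have h2 : (QuotientGroup.mk (⟨fun g g' => (a : G → G → Fˣ) (ψ g) (ψ g'), hfp⟩ :
          ↥(twoCocycles η)) : H2 η) = c₁ ^ j := by
        rw [h1, hidx, ha', hpow_mod]
      rw [h2]
      apply E.injective
      rw [hE]
      exact hrel
end
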